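/- arXiv:1804.02550 — 11 statements merged into one kernel-verified Lean document; each statement's English description precedes it below -/
import Mathlib

section
/- In the Knödel graph W_{Δ,n} with bipartition U = {u_1,...,u_{n/2}} and V = {v_1,...,v_{n/2}}, two vertices u_i and u_j (i ≠ j) have a common neighbor if and only if id(u_i,u_j) ∈ M_Δ or n/2 - id(u_i,u_j) ∈ M_Δ, where M_Δ = {2^a - 2^b : 0 ≤ b < a < Δ} and id(u_i,u_j) = min{|i-j|, n/2 - |i-j|}. -/
/-- The Knödel graph `W_{Δ,n}` with `m = n/2`: bipartite graph on `U ⊕ V`,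
where `u_i` (as `Sum.inl i`, indices mod `m`) is adjacent to `v_j` (`Sum.inr j`)
iff `j ≡ i + 2^k - 1 (mod m)` for some `k < Δ`. -/
def knodel (Δ m : ℕ) : SimpleGraph (ZMod m ⊕ ZMod m) where
  Adj x y := match x, y with
    | Sum.inl i, Sum.inr j => ∃ k, k < Δ ∧ j = i + 2 ^ k - 1
    | Sum.inr j, Sum.inl i => ∃ k, k < Δ ∧ j = i + 2 ^ k - 1
    | _, _ => False
  symm := ⟨by rintro (i | i) (j | j) h <;> exact h⟩
  loopless := ⟨by rintro (i | i) h <;> exact h⟩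

/-- `D` is a dominating set of `G`: every vertex not in `D` has a neighbor in `D`. -/
def IsDominatingSet {V : Type*} (G : SimpleGraph V) (D : Set V) : Prop :=
  ∀ v ∉ D, ∃ u ∈ D, G.Adj u v

/-- The domination number: minimum cardinality of a (finite) dominating set. -/
noncomputable def dominationNumber {V : Type*} (G : SimpleGraph V) : ℕ :=
  sInf {k | ∃ D : Set V, D.Finite ∧ D.ncard = k ∧ IsDominatingSet G D}

/-- Index-distance of `u_i` and `u_j`: `min(|i-j|, m - |i-j|)`. -/
def idDist (m i j : ℕ) : ℕ :=
  min ((i : ℤ) - (j : ℤ)).natAbs (m - ((i : ℤ) - (j : ℤ)).natAbs)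

/-- `M_Δ = {2^a - 2^b : 0 ≤ b < a < Δ}`. -/
def Mset (Δ : ℕ) : Set ℕ := {d | ∃ a b : ℕ, b < a ∧ a < Δ ∧ d = 2 ^ a - 2 ^ b}

lemma core (Δ m : ℕ) (hΔ2 : 2 ≤ Δ) (hm : 2 ^ Δ ≤ 2 * m) (i j : ℕ)
    (hi1 : 1 ≤ i) (hi2 : i ≤ m) (hj1 : 1 ≤ j) (hj2 : j ≤ m) (hij : i ≠ j) :
    (∃ k l, k < Δ ∧ l < Δ ∧ (m:ℤ) ∣ ((j:ℤ) + 2 ^ l) - ((i:ℤ) + 2 ^ k)) ↔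
    (((i:ℤ) - (j:ℤ)).natAbs ∈ Mset Δ ∨ m - ((i:ℤ) - (j:ℤ)).natAbs ∈ Mset Δ) := by
  have hpow : ∀ k, k < Δ → 2 ^ k ≤ m := by
    intro k hk
    have h1 : (2:ℕ) ^ (k+1) ≤ 2 ^ Δ := Nat.pow_le_pow_right (by norm_num) hk
    have h2 : (2:ℕ) ^ (k+1) = 2 ^ k * 2 := by ring
    omega
  have hm2 : 2 ≤ m := by
    have h4 : (4:ℕ) ≤ 2 ^ Δ := by
      calc (4:ℕ) = 2 ^ 2 := rfl
      _ ≤ 2 ^ Δ := Nat.pow_le_pow_right (by norm_num) hΔ2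
    omega
  have hm0 : (0:ℤ) < (m:ℤ) := by exact_mod_cast (by omega : 0 < m)
  have hij' : (i:ℤ) ≠ (j:ℤ) := by exact_mod_cast fun h => hij (Nat.cast_injective h)
  constructor
  · rintro ⟨k, l, hk, hl, q, hq⟩
    have hKm : (2:ℕ) ^ k ≤ m := hpow k hk
    have hLm : (2:ℕ) ^ l ≤ m := hpow l hl
    have hK1 : (1:ℕ) ≤ 2 ^ k := Nat.one_le_two_pow
    have hL1 : (1:ℕ) ≤ 2 ^ l := Nat.one_le_two_pow
    have hKc : ((2:ℤ)) ^ k = ((2 ^ k : ℕ) : ℤ) := by push_cast; ring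
    have hLc : ((2:ℤ)) ^ l = ((2 ^ l : ℕ) : ℤ) := by push_cast; ring
    rw [hKc, hLc] at hq
    have hKm' : ((2 ^ k : ℕ) : ℤ) ≤ (m:ℤ) := by exact_mod_cast hKm
    have hLm' : ((2 ^ l : ℕ) : ℤ) ≤ (m:ℤ) := by exact_mod_cast hLm
    have hK1' : (1:ℤ) ≤ ((2 ^ k : ℕ) : ℤ) := by exact_mod_cast hK1
    have hL1' : (1:ℤ) ≤ ((2 ^ l : ℕ) : ℤ) := by exact_mod_cast hL1
    have hi2' : (i:ℤ) ≤ (m:ℤ) := by exact_mod_cast hi2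
    have hj2' : (j:ℤ) ≤ (m:ℤ) := by exact_mod_cast hj2
    have hi1' : (1:ℤ) ≤ (i:ℤ) := by exact_mod_cast hi1
    have hj1' : (1:ℤ) ≤ (j:ℤ) := by exact_mod_cast hj1
    have hq' : q = 0 ∨ q = 1 ∨ q = -1 := by
      have hub : (m:ℤ) * q < (m:ℤ) * 2 := by rw [← hq]; linarith
      have hlb : (m:ℤ) * (-2) < (m:ℤ) * q := by rw [← hq]; linarith
      have h1 : q < 2 := by exact_mod_cast (mul_lt_mul_iff_right₀ hm0).mp hub
      have h2 : -2 < q := by exact_mod_cast (mul_lt_mul_iff_right₀ hm0).mp hlb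
      omega
    have htri : (k < l ∧ 2 ^ k < 2 ^ l) ∨ (2 ^ k = 2 ^ l) ∨ (l < k ∧ 2 ^ l < 2 ^ k) := by
      rcases Nat.lt_trichotomy k l with h | h | h
      · exact Or.inl ⟨h, Nat.pow_lt_pow_right (by norm_num) h⟩
      · exact Or.inr (Or.inl (by rw [h]))
      · exact Or.inr (Or.inr ⟨h, Nat.pow_lt_pow_right (by norm_num) h⟩)
    suffices hs : (((i:ℤ) - j).natAbs = 2 ^ l - 2 ^ k ∧ k < l) ∨
        (((i:ℤ) - j).natAbs = 2 ^ k - 2 ^ l ∧ l < k) ∨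
        (m - ((i:ℤ) - j).natAbs = 2 ^ l - 2 ^ k ∧ k < l) ∨
        (m - ((i:ℤ) - j).natAbs = 2 ^ k - 2 ^ l ∧ l < k) by
      rcases hs with ⟨h, hlt⟩ | ⟨h, hlt⟩ | ⟨h, hlt⟩ | ⟨h, hlt⟩
      · exact Or.inl ⟨l, k, hlt, hl, h⟩
      · exact Or.inl ⟨k, l, hlt, hk, h⟩
      · exact Or.inr ⟨l, k, hlt, hl, h⟩
      · exact Or.inr ⟨k, l, hlt, hk, h⟩
    rcases hq' with rfl | rfl | rfl <;> omega
  · have hi2' : (i:ℤ) ≤ (m:ℤ) := by exact_mod_cast hi2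
    have hj2' : (j:ℤ) ≤ (m:ℤ) := by exact_mod_cast hj2
    have hi1' : (1:ℤ) ≤ (i:ℤ) := by exact_mod_cast hi1
    have hj1' : (1:ℤ) ≤ (j:ℤ) := by exact_mod_cast hj1
    have hdm : ((i:ℤ) - j).natAbs < m := by omega
    rintro (⟨a, b, hba, haΔ, hd⟩ | ⟨a, b, hba, haΔ, hd⟩) <;>
    · have ham : (2:ℕ) ^ a ≤ m := hpow a haΔ
      have hab : (2:ℕ) ^ b < 2 ^ a := Nat.pow_lt_pow_right (by norm_num) hba
      have hbΔ : b < Δ := lt_trans hba haΔ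
      have hac : ((2:ℤ)) ^ a = ((2 ^ a : ℕ) : ℤ) := by push_cast; ring
      have hbc : ((2:ℤ)) ^ b = ((2 ^ b : ℕ) : ℤ) := by push_cast; ring
      rcases le_or_gt i j with hle | hlt <;>
      first
      | exact ⟨a, b, haΔ, hbΔ, ⟨0, by rw [hac, hbc]; omega⟩⟩
      | exact ⟨b, a, hbΔ, haΔ, ⟨0, by rw [hac, hbc]; omega⟩⟩
      | exact ⟨b, a, hbΔ, haΔ, ⟨1, by rw [hac, hbc]; omega⟩⟩
      | exact ⟨a, b, haΔ, hbΔ, ⟨-1, by rw [hac, hbc]; omega⟩⟩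

lemma bridge (Δ m : ℕ) (i j : ℕ) :
    (∃ w, (knodel Δ m).Adj (Sum.inl (i : ZMod m)) w ∧
          (knodel Δ m).Adj (Sum.inl (j : ZMod m)) w) ↔
    (∃ k l, k < Δ ∧ l < Δ ∧ (m:ℤ) ∣ ((j:ℤ) + 2 ^ l) - ((i:ℤ) + 2 ^ k)) := by
  constructor
  · rintro ⟨w, h1, h2⟩
    rcases w with x | x
    · exact absurd h1 (by simp [knodel])
    · obtain ⟨k, hk, hxk⟩ := h1
      obtain ⟨l, hl, hxl⟩ := h2
      refine ⟨k, l, hk, hl, ?_⟩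
      have h3 : (i : ZMod m) + 2 ^ k - 1 = (j : ZMod m) + 2 ^ l - 1 := hxk.symm.trans hxl
      have hz : ((i + 2 ^ k : ℕ) : ZMod m) = ((j + 2 ^ l : ℕ) : ZMod m) := by
        push_cast
        linear_combination h3
      rw [ZMod.natCast_eq_natCast_iff] at hz
      have := (Nat.modEq_iff_dvd).mp hz
      push_cast at this ⊢
      convert this using 1
  · rintro ⟨k, l, hk, hl, hdvd⟩
    refine ⟨Sum.inr ((i : ZMod m) + 2 ^ k - 1), ⟨k, hk, rfl⟩, ⟨l, hl, ?_⟩⟩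
    have hz : ((i + 2 ^ k : ℕ) : ZMod m) = ((j + 2 ^ l : ℕ) : ZMod m) := by
      rw [ZMod.natCast_eq_natCast_iff]
      rw [Nat.modEq_iff_dvd]
      push_cast
      convert hdvd using 1
    push_cast at hz
    linear_combination hz

theorem knodel_common_neighbor (n Δ : ℕ) (hn : Even n) (hΔ2 : 2 ≤ Δ)
    (hΔ : Δ ≤ Nat.log 2 n) (i j : ℕ)
    (hi1 : 1 ≤ i) (hi2 : i ≤ n / 2) (hj1 : 1 ≤ j) (hj2 : j ≤ n / 2) (hij : i ≠ j) :
    (∃ w, (knodel Δ (n / 2)).Adj (Sum.inl (i : ZMod (n / 2))) w ∧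
          (knodel Δ (n / 2)).Adj (Sum.inl (j : ZMod (n / 2))) w) ↔
    (idDist (n / 2) i j ∈ Mset Δ ∨ n / 2 - idDist (n / 2) i j ∈ Mset Δ) := by
  have hn0 : n ≠ 0 := by
    rintro rfl
    simp [Nat.log] at hΔ
    omega
  have hpn : 2 ^ Δ ≤ n := Nat.pow_le_of_le_log hn0 hΔ
  have h2m : n / 2 * 2 = n := Nat.div_two_mul_two_of_even hn
  have hm : 2 ^ Δ ≤ 2 * (n / 2) := by omega
  rw [bridge, core Δ (n / 2) hΔ2 hm i j hi1 hi2 hj1 hj2 hij]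
  have hm2 : 2 ≤ n / 2 := by
    have h4 : (4:ℕ) ≤ 2 ^ Δ := by
      calc (4:ℕ) = 2 ^ 2 := rfl
      _ ≤ 2 ^ Δ := Nat.pow_le_pow_right (by norm_num) hΔ2
    omega
  have hd1 : 1 ≤ ((i:ℤ) - j).natAbs := by omega
  have hd2 : ((i:ℤ) - j).natAbs < n / 2 := by omega
  have hmin : (idDist (n / 2) i j = ((i:ℤ) - j).natAbs ∧
      n / 2 - idDist (n / 2) i j = n / 2 - ((i:ℤ) - j).natAbs) ∨
      (idDist (n / 2) i j = n / 2 - ((i:ℤ) - j).natAbs ∧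
      n / 2 - idDist (n / 2) i j = ((i:ℤ) - j).natAbs) := by
    unfold idDist
    omega
  rcases hmin with ⟨h1, h2⟩ | ⟨h1, h2⟩ <;> rw [h2, h1]
  exact or_comm
end

section
/- For every even integer n ≥ 20 with n ≡ 0 (mod 10), the domination number of the 4-regular Knödel graph W_{4,n} equals n/5. -/
section helper

variable (m : ℕ)

def cn (x : ZMod m ⊕ ZMod m) : Finset (ZMod m ⊕ ZMod m) :=
  match x with
  | Sum.inl i => {Sum.inl i, Sum.inr i, Sum.inr (i+1), Sum.inr (i+3), Sum.inr (i+7)}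
  | Sum.inr j => {Sum.inr j, Sum.inl j, Sum.inl (j-1), Sum.inl (j-3), Sum.inl (j-7)}

lemma cn_card_le (x : ZMod m ⊕ ZMod m) : (cn m x).card ≤ 5 := by
  cases x <;> · unfold cn
                refine le_trans (Finset.card_insert_le _ _) ?_
                refine le_trans (Nat.add_le_add_right (Finset.card_insert_le _ _) 1) ?_
                refine le_trans (Nat.add_le_add_right (Nat.add_le_add_right (Finset.card_insert_le _ _) 1) 1) ?_
                refine le_trans (Nat.add_le_add_right (Nat.add_le_add_right (Nat.add_le_add_right (Finset.card_insert_le _ _) 1) 1) 1) ?_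
                simp

lemma mem_cn_self (x : ZMod m ⊕ ZMod m) : x ∈ cn m x := by
  cases x <;> simp [cn]

lemma adj_mem_cn {u v : ZMod m ⊕ ZMod m} (h : (knodel 4 m).Adj u v) : v ∈ cn m u := by
  rcases u with i | j <;> rcases v with i' | j'
  · exact h.elim
  · obtain ⟨k, hk, rfl⟩ := h
    interval_cases k <;>
      · simp only [cn, Finset.mem_insert, Finset.mem_singleton, Sum.inl.injEq, Sum.inr.injEq,
          reduceCtorEq, false_or, or_false]
        first
          | (left; ring1)
          | (right; left; ring1)
          | (right; right; left; ring1)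
          | (right; right; right; ring1)
  · obtain ⟨k, hk, rfl⟩ := h
    interval_cases k <;>
      · simp only [cn, Finset.mem_insert, Finset.mem_singleton, Sum.inl.injEq, Sum.inr.injEq,
          reduceCtorEq, false_or, or_false]
        first
          | (left; ring1)
          | (right; left; ring1)
          | (right; right; left; ring1)
          | (right; right; right; ring1)
  · exact h.elim

lemma lower_bound (hm : 10 ≤ m) (h5 : m % 5 = 0) (D : Set (ZMod m ⊕ ZMod m))
    (hfin : D.Finite) (hdom : IsDominatingSet (knodel 4 m) D) :
    2 * (m / 5) ≤ D.ncard := by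
  haveI : NeZero m := ⟨by omega⟩
  set DF := hfin.toFinset with hDF
  have hcov : (Finset.univ : Finset (ZMod m ⊕ ZMod m)) ⊆ DF.biUnion (cn m) := by
    intro v _
    rw [Finset.mem_biUnion]
    by_cases hv : v ∈ D
    · exact ⟨v, by simp [hDF, hv], mem_cn_self m v⟩
    · obtain ⟨u, hu, hadj⟩ := hdom v hv
      exact ⟨u, by simp [hDF, hu], adj_mem_cn m hadj⟩
  have h1 : Fintype.card (ZMod m ⊕ ZMod m) ≤ DF.card * 5 := by
    calc Fintype.card (ZMod m ⊕ ZMod m) = Finset.univ.card := rfl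
    _ ≤ (DF.biUnion (cn m)).card := Finset.card_le_card hcov
    _ ≤ ∑ u ∈ DF, (cn m u).card := Finset.card_biUnion_le
    _ ≤ ∑ u ∈ DF, 5 := Finset.sum_le_sum (fun u _ => cn_card_le m u)
    _ = DF.card * 5 := by rw [Finset.sum_const, smul_eq_mul]
  have hcard : Fintype.card (ZMod m ⊕ ZMod m) = m + m := by
    rw [Fintype.card_sum, ZMod.card]
  have hn : D.ncard = DF.card := Set.ncard_eq_toFinset_card D hfin
  omega

def dmap (t : Fin (m/5) ⊕ Fin (m/5)) : ZMod m ⊕ ZMod m :=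
  match t with
  | Sum.inl t => Sum.inl ((5*t.val+1 : ℕ) : ZMod m)
  | Sum.inr t => Sum.inr ((5*t.val : ℕ) : ZMod m)

lemma val_add_nat [NeZero m] (i : ZMod m) (c : ℕ) (hc : c < m) :
    (i + (c : ZMod m)).val = (i.val + c) % m := by
  rw [ZMod.val_add, ZMod.val_natCast_of_lt hc]

lemma mem_range_l (hm : 10 ≤ m) (h5 : m % 5 = 0) (i : ZMod m) :
    Sum.inl i ∈ Set.range (dmap m) ↔ i.val % 5 = 1 := by
  haveI : NeZero m := ⟨by omega⟩
  constructor
  · rintro ⟨(t | t), ht⟩ <;> simp only [dmap, Sum.inl.injEq, reduceCtorEq] at ht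
    have h1 : (5*t.val+1) < m := by have := t.isLt; omega
    rw [← ht, ZMod.val_natCast_of_lt h1]
    omega
  · intro hi
    have hlt : i.val < m := ZMod.val_lt i
    refine ⟨Sum.inl ⟨i.val / 5, by omega⟩, ?_⟩
    simp only [dmap, Sum.inl.injEq]
    have : 5 * (i.val / 5) + 1 = i.val := by omega
    rw [this, ZMod.natCast_rightInverse i]

lemma mem_range_r (hm : 10 ≤ m) (h5 : m % 5 = 0) (j : ZMod m) :
    Sum.inr j ∈ Set.range (dmap m) ↔ j.val % 5 = 0 := by
  haveI : NeZero m := ⟨by omega⟩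
  constructor
  · rintro ⟨(t | t), ht⟩ <;> simp only [dmap, Sum.inr.injEq, reduceCtorEq] at ht
    have h1 : (5*t.val) < m := by have := t.isLt; omega
    rw [← ht, ZMod.val_natCast_of_lt h1]
    omega
  · intro hj
    have hlt : j.val < m := ZMod.val_lt j
    refine ⟨Sum.inr ⟨j.val / 5, by omega⟩, ?_⟩
    simp only [dmap, Sum.inr.injEq]
    have : 5 * (j.val / 5) = j.val := by omega
    rw [this, ZMod.natCast_rightInverse j]

end helper

section helper2
variable (m : ℕ)

lemma add_val_mod5 (h5 : m % 5 = 0) [NeZero m] (i : ZMod m) (c : ℕ) (hc : c < m) :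
    (i + (c:ZMod m)).val % 5 = (i.val + c) % 5 := by
  rw [val_add_nat m i c hc, Nat.mod_mod_of_dvd _ (Nat.dvd_of_mod_eq_zero h5)]

lemma dmap_inj (hm : 10 ≤ m) (h5 : m % 5 = 0) : Function.Injective (dmap m) := by
  haveI : NeZero m := ⟨by omega⟩
  rintro (a | a) (b | b) hab <;>
    simp only [dmap, Sum.inl.injEq, Sum.inr.injEq, reduceCtorEq] at hab
  · have ha : 5*a.val+1 < m := by have := a.isLt; omega
    have hb : 5*b.val+1 < m := by have := b.isLt; omega
    have := congrArg ZMod.val hab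
    rw [ZMod.val_natCast_of_lt ha, ZMod.val_natCast_of_lt hb] at this
    exact congrArg Sum.inl (Fin.ext (by omega))
  · have ha : 5*a.val < m := by have := a.isLt; omega
    have hb : 5*b.val < m := by have := b.isLt; omega
    have := congrArg ZMod.val hab
    rw [ZMod.val_natCast_of_lt ha, ZMod.val_natCast_of_lt hb] at this
    exact congrArg Sum.inr (Fin.ext (by omega))

lemma dmap_ncard (hm : 10 ≤ m) (h5 : m % 5 = 0) :
    (Set.range (dmap m)).ncard = 2 * (m/5) := by
  rw [← Set.image_univ, Set.ncard_image_of_injective _ (dmap_inj m hm h5),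
    Set.ncard_univ]
  rw [Nat.card_sum]
  simp only [Nat.card_eq_fintype_card, Fintype.card_fin]
  omega

lemma dmap_dom (hm : 10 ≤ m) (h5 : m % 5 = 0) :
    IsDominatingSet (knodel 4 m) (Set.range (dmap m)) := by
  haveI : NeZero m := ⟨by omega⟩
  have he0 : (2:ZMod m)^0 - 1 = ((0:ℕ) : ZMod m) := by push_cast; norm_num
  have he1 : (2:ZMod m)^1 - 1 = ((1:ℕ) : ZMod m) := by push_cast; norm_num
  have he2 : (2:ZMod m)^2 - 1 = ((3:ℕ) : ZMod m) := by push_cast; norm_num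
  have he3 : (2:ZMod m)^3 - 1 = ((7:ℕ) : ZMod m) := by push_cast; norm_num
  rintro (i | j) hv
  · rw [mem_range_l m hm h5] at hv
    have hlt := ZMod.val_lt i
    have hr : i.val % 5 = 0 ∨ i.val % 5 = 2 ∨ i.val % 5 = 3 ∨ i.val % 5 = 4 := by omega
    rcases hr with h|h|h|h
    · refine ⟨Sum.inr (i + 2^0 - 1), ?_, ⟨0, by norm_num, rfl⟩⟩
      rw [mem_range_r m hm h5, add_sub_assoc, he0, add_val_mod5 m h5 i 0 (by omega)]
      omega
    · refine ⟨Sum.inr (i + 2^2 - 1), ?_, ⟨2, by norm_num, rfl⟩⟩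
      rw [mem_range_r m hm h5, add_sub_assoc, he2, add_val_mod5 m h5 i 3 (by omega)]
      omega
    · refine ⟨Sum.inr (i + 2^3 - 1), ?_, ⟨3, by norm_num, rfl⟩⟩
      rw [mem_range_r m hm h5, add_sub_assoc, he3, add_val_mod5 m h5 i 7 (by omega)]
      omega
    · refine ⟨Sum.inr (i + 2^1 - 1), ?_, ⟨1, by norm_num, rfl⟩⟩
      rw [mem_range_r m hm h5, add_sub_assoc, he1, add_val_mod5 m h5 i 1 (by omega)]
      omega
  · rw [mem_range_r m hm h5] at hv
    have hlt := ZMod.val_lt j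
    have hr : j.val % 5 = 1 ∨ j.val % 5 = 2 ∨ j.val % 5 = 3 ∨ j.val % 5 = 4 := by omega
    rcases hr with h|h|h|h
    · refine ⟨Sum.inl (j - (2^0 - 1)), ?_, ⟨0, by norm_num, by ring⟩⟩
      rw [mem_range_l m hm h5]
      have hij : (j - (2^0 - 1)) + ((0:ℕ):ZMod m) = j := by rw [← he0]; ring
      have := add_val_mod5 m h5 (j - (2^0 - 1)) 0 (by omega)
      rw [hij] at this; omega
    · refine ⟨Sum.inl (j - (2^1 - 1)), ?_, ⟨1, by norm_num, by ring⟩⟩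
      rw [mem_range_l m hm h5]
      have hij : (j - (2^1 - 1)) + ((1:ℕ):ZMod m) = j := by rw [← he1]; ring
      have := add_val_mod5 m h5 (j - (2^1 - 1)) 1 (by omega)
      rw [hij] at this; omega
    · refine ⟨Sum.inl (j - (2^3 - 1)), ?_, ⟨3, by norm_num, by ring⟩⟩
      rw [mem_range_l m hm h5]
      have hij : (j - (2^3 - 1)) + ((7:ℕ):ZMod m) = j := by rw [← he3]; ring
      have := add_val_mod5 m h5 (j - (2^3 - 1)) 7 (by omega)
      rw [hij] at this; omega
    · refine ⟨Sum.inl (j - (2^2 - 1)), ?_, ⟨2, by norm_num, by ring⟩⟩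
      rw [mem_range_l m hm h5]
      have hij : (j - (2^2 - 1)) + ((3:ℕ):ZMod m) = j := by rw [← he2]; ring
      have := add_val_mod5 m h5 (j - (2^2 - 1)) 3 (by omega)
      rw [hij] at this; omega

lemma helper_main (hm : 10 ≤ m) (h5 : m % 5 = 0) :
    dominationNumber (knodel 4 m) = 2 * (m/5) := by
  have hmem : 2*(m/5) ∈ {k | ∃ D : Set (ZMod m ⊕ ZMod m),
      D.Finite ∧ D.ncard = k ∧ IsDominatingSet (knodel 4 m) D} := by
    haveI : NeZero m := ⟨by omega⟩
    exact ⟨Set.range (dmap m), Set.finite_range _, dmap_ncard m hm h5, dmap_dom m hm h5⟩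
  refine le_antisymm (Nat.sInf_le hmem) (le_csInf ⟨_, hmem⟩ ?_)
  rintro k ⟨D, hfin, rfl, hdom⟩
  exact lower_bound m hm h5 D hfin hdom

end helper2

theorem domination_knodel_mod0 (n : ℕ) (h : 20 ≤ n) (hmod : n % 10 = 0) :
    dominationNumber (knodel 4 (n / 2)) = n / 5 := by
  rw [helper_main (n/2) (by omega) (by omega)]
  omega
end

section
/- For every even integer n ≥ 22 with n ≡ 2 (mod 10), the domination number of W_{4,n} equals 2⌊n/10⌋ + 2. -/
lemma natCast_inj' {m : ℕ} [NeZero m] {a b : ℕ} (ha : a < m) (hb : b < m)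
    (h : (a : ZMod m) = b) : a = b := by
  have h1 := ZMod.val_cast_of_lt ha
  rw [h, ZMod.val_cast_of_lt hb] at h1
  omega

def Cn : Finset ℕ := {0, 1, 3, 7}

lemma key (m t : ℕ) (hm : m = 5*t+1) (ht : 2 ≤ t) (S T : Finset (ZMod m))
    (hS : S.card = t) (hT : T.card ≤ t + 1)
    (hcov : ∀ x : ZMod m, x ∈ T ∨ ∃ j ∈ S, ∃ c ∈ Cn, x = j - (c : ZMod m)) :
    False := by
  haveI : NeZero m := ⟨by omega⟩
  haveI : Fact (1 < m) := ⟨by omega⟩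
  classical
  set C : Finset (ZMod m) := Cn.image (Nat.cast) with hCdef
  set NB : Finset (ZMod m) := (S ×ˢ C).image (fun p => p.1 - p.2) with hNB
  have hsub : (Finset.univ : Finset (ZMod m)) ⊆ T ∪ NB := by
    intro x _
    rcases hcov x with h | ⟨j, hj, c, hc, rfl⟩
    · exact Finset.mem_union_left _ h
    · refine Finset.mem_union_right _ (Finset.mem_image.2 ⟨(j, (c : ZMod m)), ?_, rfl⟩)
      exact Finset.mem_product.2 ⟨hj, Finset.mem_image.2 ⟨c, hc, rfl⟩⟩
  have hCcard : C.card = 4 := by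
    rw [hCdef, Finset.card_image_of_injOn, show Cn.card = 4 from rfl]
    intro a ha b hb hab
    simp only [Cn, Finset.coe_insert, Set.mem_insert_iff, Finset.coe_singleton,
      Set.mem_singleton_iff] at ha hb
    have ha7 : a ≤ 7 := by rcases ha with rfl|rfl|rfl|rfl <;> norm_num
    have hb7 : b ≤ 7 := by rcases hb with rfl|rfl|rfl|rfl <;> norm_num
    exact natCast_inj' (by omega) (by omega) hab
  have hprod : (S ×ˢ C).card = 4 * t := by
    rw [Finset.card_product, hS, hCcard]; ring
  have hNBle : NB.card ≤ 4 * t := hprod ▸ Finset.card_image_le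
  have h1 : m ≤ (T ∪ NB).card := by
    have := Finset.card_le_card hsub
    rwa [Finset.card_univ, ZMod.card] at this
  have hUle := Finset.card_union_le T NB
  have hNBcard : NB.card = 4 * t := by omega
  have hinj : Set.InjOn (fun p : ZMod m × ZMod m => p.1 - p.2) ↑(S ×ˢ C) :=
    Finset.card_image_iff.mp (by rw [hNB] at hNBcard; rw [hNBcard, hprod])
  -- forbidden differences
  have Pdiff : ∀ j ∈ S, ∀ j' ∈ S, ∀ d : ℕ, 1 ≤ d → d ≤ 7 → d ≠ 5 →
      j' ≠ j + (d : ZMod m) := by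
    intro j hj j' hj' d h1d h2d h5d heq
    obtain ⟨c, c', hc, hc', hsum⟩ : ∃ c c' : ℕ, c ∈ Cn ∧ c' ∈ Cn ∧ c' = c + d := by
      interval_cases d
      · exact ⟨0, 1, by decide, by decide, rfl⟩
      · exact ⟨1, 3, by decide, by decide, rfl⟩
      · exact ⟨0, 3, by decide, by decide, rfl⟩
      · exact ⟨3, 7, by decide, by decide, rfl⟩
      · exact absurd rfl h5d
      · exact ⟨1, 7, by decide, by decide, rfl⟩
      · exact ⟨0, 7, by decide, by decide, rfl⟩
    have hmem : ((j', (c' : ZMod m)) : ZMod m × ZMod m) ∈ (↑(S ×ˢ C) : Set _) := by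
      simp only [Finset.coe_product, Set.mem_prod, Finset.mem_coe]
      exact ⟨hj', Finset.mem_image.2 ⟨c', hc', rfl⟩⟩
    have hmem' : ((j, (c : ZMod m)) : ZMod m × ZMod m) ∈ (↑(S ×ˢ C) : Set _) := by
      simp only [Finset.coe_product, Set.mem_prod, Finset.mem_coe]
      exact ⟨hj, Finset.mem_image.2 ⟨c, hc, rfl⟩⟩
    have heq2 : j' - (c' : ZMod m) = j - (c : ZMod m) := by
      subst hsum heq; push_cast; ring
    have := hinj hmem hmem' heq2
    have hcc : ((c' : ℕ) : ZMod m) = (c : ℕ) := congrArg Prod.snd this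
    have hc7 : c ≤ 7 := by fin_cases hc <;> norm_num
    have hc'7 : c' ≤ 7 := by fin_cases hc' <;> norm_num
    have := natCast_inj' (by omega) (by omega) hcc
    omega
  -- blocks of 5 consecutive
  set Bl : Finset (ZMod m) :=
    S.biUnion (fun j => (Finset.range 5).image (fun x => j + (x : ℕ))) with hBldef
  have hblock_mem : ∀ x : ZMod m, x ∈ Bl ↔ ∃ j ∈ S, ∃ k < 5, x = j + (k : ℕ) := by
    intro x
    simp only [hBldef, Finset.mem_biUnion, Finset.mem_image, Finset.mem_range]
    constructor
    · rintro ⟨j, hj, k, hk, rfl⟩; exact ⟨j, hj, k, hk, rfl⟩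
    · rintro ⟨j, hj, k, hk, rfl⟩; exact ⟨j, hj, k, hk, rfl⟩
  have hsame : ∀ j ∈ S, ∀ j' ∈ S, ∀ x < 5, ∀ y < 5,
      j + (x : ℕ) = j' + (y : ℕ) → j = j' ∧ x = y := by
    intro j hj j' hj' x hx y hy hxy
    rcases lt_trichotomy x y with h | h | h
    · exfalso
      have hy' : ((y : ℕ) : ZMod m) = ((y - x : ℕ) : ZMod m) + (x : ℕ) := by
        push_cast [Nat.cast_sub h.le]; ring
      rw [hy', ← add_assoc] at hxy
      have := add_right_cancel hxy
      exact Pdiff j' hj' j hj (y - x) (by omega) (by omega) (by omega) this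
    · subst h
      exact ⟨add_right_cancel hxy, rfl⟩
    · exfalso
      have hx' : ((x : ℕ) : ZMod m) = ((x - y : ℕ) : ZMod m) + (y : ℕ) := by
        push_cast [Nat.cast_sub h.le]; ring
      rw [hx', ← add_assoc] at hxy
      have := add_right_cancel hxy.symm
      exact Pdiff j hj j' hj' (x - y) (by omega) (by omega) (by omega) this
  have hBlcard : Bl.card = 5 * t := by
    rw [hBldef, Finset.card_biUnion]
    · have : ∀ j ∈ S, ((Finset.range 5).image (fun x => j + (x : ℕ))).card = 5 := by
        intro j hj
        rw [Finset.card_image_of_injOn, Finset.card_range]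
        intro x hx y hy hxy
        simp only [Finset.mem_coe, Finset.mem_range] at hx hy
        have := (hsame j hj j hj x hx y hy (by exact hxy)).2
        exact this
      rw [Finset.sum_congr rfl this, Finset.sum_const, hS, smul_eq_mul]; ring
    · intro j hj j' hj' hne
      rw [Function.onFun, Finset.disjoint_left]
      rintro a ha ha'
      simp only [Finset.mem_image, Finset.mem_range] at ha ha'
      obtain ⟨x, hx, rfl⟩ := ha
      obtain ⟨y, hy, he⟩ := ha'
      exact hne ((hsame j hj j' hj' x hx y hy he.symm).1)
  have hcompl : (Finset.univ \ Bl).card = 1 := by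
    rw [Finset.card_sdiff_of_subset (Finset.subset_univ _), Finset.card_univ, ZMod.card, hBlcard]
    omega
  obtain ⟨z, hz⟩ := Finset.card_eq_one.mp hcompl
  have hzmem : ∀ x : ZMod m, x ∉ Bl ↔ x = z := by
    intro x
    constructor
    · intro hx
      have : x ∈ Finset.univ \ Bl := Finset.mem_sdiff.2 ⟨Finset.mem_univ _, hx⟩
      rw [hz] at this; simpa using this
    · intro hxz
      rw [hxz]
      have : z ∈ Finset.univ \ Bl := hz ▸ Finset.mem_singleton_self z
      exact (Finset.mem_sdiff.1 this).2
  by_cases hex : ∃ j₀ ∈ S, j₀ + 5 = z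
  · obtain ⟨j₀, hj₀, hjz⟩ := hex
    have h1' : z + 1 ∈ Bl := by
      by_contra hc
      have h0 : z + 1 = z := (hzmem _).1 hc
      have : (1 : ZMod m) = 0 := by linear_combination h0
      exact one_ne_zero this
    obtain ⟨j'', hj'', x, hx5, hxe⟩ := (hblock_mem _).1 h1'
    have h6 : j₀ + (6 : ZMod m) = j'' + ((x : ℕ) : ZMod m) := by
      rw [← hxe, ← hjz]; ring
    interval_cases x
    · exact Pdiff j₀ hj₀ j'' hj'' 6 (by norm_num) (by norm_num) (by norm_num)
        (by push_cast at h6 ⊢; linear_combination -h6)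
    · have hz'' : j'' = z := by rw [← hjz]; push_cast at h6; linear_combination -h6
      have : j'' ∈ Bl := (hblock_mem _).2 ⟨j'', hj'', 0, by norm_num, by push_cast; ring⟩
      rw [hz''] at this
      exact ((hzmem z).2 rfl) this
    · exact Pdiff j₀ hj₀ j'' hj'' 4 (by norm_num) (by norm_num) (by norm_num)
        (by push_cast at h6 ⊢; linear_combination -h6)
    · exact Pdiff j₀ hj₀ j'' hj'' 3 (by norm_num) (by norm_num) (by norm_num)
        (by push_cast at h6 ⊢; linear_combination -h6)
    · exact Pdiff j₀ hj₀ j'' hj'' 2 (by norm_num) (by norm_num) (by norm_num)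
        (by push_cast at h6 ⊢; linear_combination -h6)
  · push_neg at hex
    have hclosed : ∀ j ∈ S, j + 5 ∈ S := by
      intro j hj
      have h1' : j + 5 ∈ Bl := by
        by_contra hc
        exact hex j hj ((hzmem _).1 hc)
      obtain ⟨j', hj', x, hx5, hxe⟩ := (hblock_mem _).1 h1'
      interval_cases x
      · have : j' = j + 5 := by push_cast at hxe; linear_combination -hxe
        rwa [← this]
      · exact absurd (by push_cast at hxe ⊢; linear_combination -hxe)
          (Pdiff j hj j' hj' 4 (by norm_num) (by norm_num) (by norm_num))
      · exact absurd (by push_cast at hxe ⊢; linear_combination -hxe)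
          (Pdiff j hj j' hj' 3 (by norm_num) (by norm_num) (by norm_num))
      · exact absurd (by push_cast at hxe ⊢; linear_combination -hxe)
          (Pdiff j hj j' hj' 2 (by norm_num) (by norm_num) (by norm_num))
      · exact absurd (by push_cast at hxe ⊢; linear_combination -hxe)
          (Pdiff j hj j' hj' 1 (by norm_num) (by norm_num) (by norm_num))
    obtain ⟨j₀, hj₀⟩ := Finset.card_pos.mp (by omega : 0 < S.card)
    have hiter : ∀ k : ℕ, j₀ + ((5 * k : ℕ) : ZMod m) ∈ S := by
      intro k
      induction k with
      | zero => simpa using hj₀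
      | succ k ih =>
        have h2 := hclosed _ ih
        have he : j₀ + ((5 * (k+1) : ℕ) : ZMod m) = (j₀ + ((5 * k : ℕ) : ZMod m)) + 5 := by
          push_cast; ring
        rwa [he]
    have hm0 : 5 * (t : ZMod m) + 1 = 0 := by
      have : ((5 * t + 1 : ℕ) : ZMod m) = 0 := by rw [← hm]; exact ZMod.natCast_self m
      push_cast at this; linear_combination this
    have hall : ∀ x : ZMod m, x ∈ S := by
      intro x
      set w : ZMod m := -(t : ZMod m) * (x - j₀) with hw
      have h5w : x = j₀ + ((5 * w.val : ℕ) : ZMod m) := by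
        push_cast
        rw [ZMod.natCast_zmod_val]
        rw [hw]
        linear_combination (x - j₀) * hm0
      rw [h5w]; exact hiter _
    have hle : (Finset.univ : Finset (ZMod m)).card ≤ S.card :=
      Finset.card_le_card (fun x _ => hall x)
    rw [Finset.card_univ, ZMod.card, hS] at hle
    omega

lemma countcov (m t : ℕ) (hm : m = 5*t+1) (S T : Finset (ZMod m))
    (hcov : ∀ x : ZMod m, x ∈ T ∨ ∃ j ∈ S, ∃ c ∈ Cn, x = j - (c : ZMod m)) :
    m ≤ T.card + 4 * S.card := by
  haveI : NeZero m := ⟨by omega⟩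
  classical
  set C : Finset (ZMod m) := Cn.image (Nat.cast) with hC
  set NB : Finset (ZMod m) := (S ×ˢ C).image (fun p => p.1 - p.2) with hNB
  have hsub : (Finset.univ : Finset (ZMod m)) ⊆ T ∪ NB := by
    intro x _
    rcases hcov x with h | ⟨j, hj, c, hc, rfl⟩
    · exact Finset.mem_union_left _ h
    · refine Finset.mem_union_right _ (Finset.mem_image.2 ⟨(j, (c : ZMod m)), ?_, rfl⟩)
      exact Finset.mem_product.2 ⟨hj, Finset.mem_image.2 ⟨c, hc, rfl⟩⟩
  have h1 : m ≤ (T ∪ NB).card := by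
    have := Finset.card_le_card hsub
    rwa [Finset.card_univ, ZMod.card] at this
  have h2 : NB.card ≤ 4 * S.card := by
    calc NB.card ≤ (S ×ˢ C).card := Finset.card_image_le
    _ = S.card * C.card := Finset.card_product _ _
    _ ≤ 4 * S.card := by
        have : C.card ≤ 4 := le_trans Finset.card_image_le (by decide)
        nlinarith
  have := Finset.card_union_le T NB
  omega

lemma lb (m t : ℕ) (hm : m = 5*t+1) (ht : 2 ≤ t) (D : Set (ZMod m ⊕ ZMod m))
    (hD : IsDominatingSet (knodel 4 m) D) : 2*t+2 ≤ D.ncard := by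
  haveI : NeZero m := ⟨by omega⟩
  classical
  by_contra hlt
  push_neg at hlt
  set A : Finset (ZMod m) := Finset.univ.filter (fun i => Sum.inl i ∈ D) with hA
  set B : Finset (ZMod m) := Finset.univ.filter (fun j => Sum.inr j ∈ D) with hB
  -- a + b ≤ ncard D
  have hab : A.card + B.card ≤ D.ncard := by
    have hsub : (↑(A.image Sum.inl ∪ B.image Sum.inr) : Set (ZMod m ⊕ ZMod m)) ⊆ D := by
      intro x hx
      simp only [Finset.coe_union, Set.mem_union, Finset.mem_coe, Finset.mem_image,
        hA, hB, Finset.mem_filter, Finset.mem_univ, true_and] at hx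
      rcases hx with ⟨i, hi, rfl⟩ | ⟨j, hj, rfl⟩
      · exact hi
      · exact hj
    have hdisj : Disjoint (A.image Sum.inl) (B.image Sum.inr) := by
      rw [Finset.disjoint_left]
      rintro x hx hx'
      simp only [Finset.mem_image] at hx hx'
      obtain ⟨i, _, rfl⟩ := hx
      obtain ⟨j, _, h⟩ := hx'
      simp at h
    calc A.card + B.card
        = (A.image Sum.inl ∪ B.image Sum.inr).card := by
          rw [Finset.card_union_of_disjoint hdisj,
            Finset.card_image_of_injective _ Sum.inl_injective,
            Finset.card_image_of_injective _ Sum.inr_injective]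
      _ = (↑(A.image Sum.inl ∪ B.image Sum.inr) : Set (ZMod m ⊕ ZMod m)).ncard :=
          (Set.ncard_coe_finset _).symm
      _ ≤ D.ncard := Set.ncard_le_ncard hsub (Set.toFinite D)
  -- coverage of the U side
  have covU : ∀ x : ZMod m, x ∈ A ∨ ∃ j ∈ B, ∃ c ∈ Cn, x = j - (c : ZMod m) := by
    intro i
    by_cases hi : Sum.inl i ∈ D
    · left; simp [hA, hi]
    · right
      obtain ⟨u, huD, hadj⟩ := hD _ hi
      rcases u with i' | j
      · exact absurd hadj (fun h => h)
      · refine ⟨j, by simp [hB, huD], ?_⟩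
        obtain ⟨k, hk, hjk⟩ := hadj
        interval_cases k
        · exact ⟨0, by decide, by push_cast; linear_combination -hjk⟩
        · exact ⟨1, by decide, by push_cast; linear_combination -hjk⟩
        · exact ⟨3, by decide, by push_cast; linear_combination -hjk⟩
        · exact ⟨7, by decide, by push_cast; linear_combination -hjk⟩
  -- coverage of the V side, phrased with negated sets
  set A' : Finset (ZMod m) := A.image (fun x => -x) with hA'
  set B' : Finset (ZMod m) := B.image (fun x => -x) with hB'
  have covV : ∀ x : ZMod m, x ∈ B' ∨ ∃ j ∈ A', ∃ c ∈ Cn, x = j - (c : ZMod m) := by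
    intro x
    by_cases hx : Sum.inr (-x) ∈ D
    · left
      exact Finset.mem_image.2 ⟨-x, by simp [hB, hx], neg_neg x⟩
    · right
      obtain ⟨u, huD, hadj⟩ := hD _ hx
      rcases u with i | j'
      · obtain ⟨k, hk, hjk⟩ := hadj
        refine ⟨-i, Finset.mem_image.2 ⟨i, by simp [hA, huD], rfl⟩, ?_⟩
        interval_cases k
        · exact ⟨0, by decide, by push_cast; linear_combination -hjk⟩
        · exact ⟨1, by decide, by push_cast; linear_combination -hjk⟩
        · exact ⟨3, by decide, by push_cast; linear_combination -hjk⟩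
        · exact ⟨7, by decide, by push_cast; linear_combination -hjk⟩
      · exact absurd hadj (fun h => h)
  have hA'c : A'.card = A.card := Finset.card_image_of_injective _ neg_injective
  have hB'c : B'.card = B.card := Finset.card_image_of_injective _ neg_injective
  have c1 : m ≤ A.card + 4 * B.card := countcov m t hm B A covU
  have c2 : m ≤ B'.card + 4 * A'.card := countcov m t hm A' B' covV
  rw [hA'c, hB'c] at c2
  have hcases : (B.card = t ∧ A.card = t + 1) ∨ (A.card = t ∧ B.card = t + 1) := by omega
  rcases hcases with ⟨hb, ha⟩ | ⟨ha, hb⟩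
  · exact key m t hm ht B A hb (le_of_eq ha) covU
  · exact key m t hm ht A' B' (hA'c.trans ha) (le_of_eq (hB'c.trans hb)) covV

lemma ub (m t : ℕ) (hm : m = 5*t+1) (ht : 2 ≤ t) :
    ∃ D : Set (ZMod m ⊕ ZMod m), D.Finite ∧ D.ncard = 2*t+2 ∧
      IsDominatingSet (knodel 4 m) D := by
  haveI : NeZero m := ⟨by omega⟩
  classical
  set AU : Finset (ZMod m) := (Finset.range (t+1)).image (fun i => ((5*i : ℕ) : ZMod m))
    with hAU
  set BV : Finset (ZMod m) :=
    insert ((5*t-3 : ℕ) : ZMod m) ((Finset.range t).image (fun i => ((5*i+4 : ℕ) : ZMod m)))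
    with hBV
  set Df : Finset (ZMod m ⊕ ZMod m) := AU.image Sum.inl ∪ BV.image Sum.inr with hDf
  have hAUcard : AU.card = t + 1 := by
    rw [hAU, Finset.card_image_of_injOn, Finset.card_range]
    intro a ha b hb hab
    simp only [Finset.coe_range, Set.mem_Iio] at ha hb
    have := natCast_inj' (by omega) (by omega) hab
    omega
  have hBVcard : BV.card = t + 1 := by
    rw [hBV, Finset.card_insert_of_notMem, Finset.card_image_of_injOn, Finset.card_range]
    · intro a ha b hb hab
      simp only [Finset.coe_range, Set.mem_Iio] at ha hb
      have := natCast_inj' (by omega) (by omega) hab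
      omega
    · intro hmem
      obtain ⟨i, hi, he⟩ := Finset.mem_image.1 hmem
      rw [Finset.mem_range] at hi
      have := natCast_inj' (by omega) (by omega) he
      omega
  have hDfcard : Df.card = 2*t+2 := by
    rw [hDf, Finset.card_union_of_disjoint, Finset.card_image_of_injective _ Sum.inl_injective,
      Finset.card_image_of_injective _ Sum.inr_injective, hAUcard, hBVcard]
    · ring
    · rw [Finset.disjoint_left]
      rintro x hx hx'
      simp only [Finset.mem_image] at hx hx'
      obtain ⟨i, _, rfl⟩ := hx
      obtain ⟨j, _, h⟩ := hx'
      simp at h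
  refine ⟨↑Df, Df.finite_toSet, by rw [Set.ncard_coe_finset, hDfcard], ?_⟩
  have hm0 : 5 * (t : ZMod m) + 1 = 0 := by
    have : ((5 * t + 1 : ℕ) : ZMod m) = 0 := by rw [← hm]; exact ZMod.natCast_self m
    push_cast at this; linear_combination this
  have hAUmem : ∀ q : ℕ, q ≤ t → Sum.inl ((5*q : ℕ) : ZMod m) ∈ Df := by
    intro q hq
    exact Finset.mem_union_left _ (Finset.mem_image.2
      ⟨((5*q : ℕ) : ZMod m), Finset.mem_image.2 ⟨q, Finset.mem_range.2 (by omega), rfl⟩, rfl⟩)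
  have hBVmem : ∀ q : ℕ, q < t → Sum.inr ((5*q+4 : ℕ) : ZMod m) ∈ Df := by
    intro q hq
    exact Finset.mem_union_right _ (Finset.mem_image.2
      ⟨_, Finset.mem_insert_of_mem (Finset.mem_image.2 ⟨q, Finset.mem_range.2 hq, rfl⟩), rfl⟩)
  have hBVmem2 : Sum.inr ((5*t-3 : ℕ) : ZMod m) ∈ Df :=
    Finset.mem_union_right _ (Finset.mem_image.2 ⟨_, Finset.mem_insert_self _ _, rfl⟩)
  intro v hv
  rcases v with i | j
  · -- u_i needs a neighbour in Df
    have hvm : i.val < m := ZMod.val_lt i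
    have hi : i = ((i.val : ℕ) : ZMod m) := (ZMod.natCast_zmod_val i).symm
    set q := i.val / 5 with hq
    have hr5 : i.val % 5 = 0 ∨ i.val % 5 = 1 ∨ i.val % 5 = 2 ∨ i.val % 5 = 3 ∨ i.val % 5 = 4 := by
      omega
    have hqr : i.val = 5*q + i.val % 5 := by omega
    rcases hr5 with h5 | h5 | h5 | h5 | h5
    · -- r = 0 : u_i is adjacent to v_i, and v_i = v_{5q}... use v? u_{5q} ∈ D but that's i itself.
      -- i ∈ D contradicts nothing since we assumed v ∉ D... instead find a neighbour.
      -- by a v in D : v_j with j = i + c, c ∈ {0,1,3,7} : j ∈ {5q,5q+1,5q+3,5q+7}.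
      exfalso
      apply hv
      have hieq : i = ((5*q : ℕ) : ZMod m) := by rw [hi, hqr, h5]; norm_num
      rw [hieq]
      exact Finset.mem_coe.2 (hAUmem q (by omega))
    · refine ⟨Sum.inr ((5*q+4 : ℕ) : ZMod m), hBVmem q (by omega), ⟨2, by norm_num, ?_⟩⟩
      rw [hi, hqr, h5]; push_cast; ring
    · by_cases hqt : q = t - 1
      · refine ⟨Sum.inr ((5*t-3 : ℕ) : ZMod m), hBVmem2, ⟨0, by norm_num, ?_⟩⟩
        rw [hi, hqr, h5, show 5*q+2 = 5*t-3 by omega]; push_cast; ring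
      · have hq2 : q + 1 < t := by omega
        refine ⟨Sum.inr ((5*(q+1)+4 : ℕ) : ZMod m), hBVmem (q+1) hq2, ⟨3, by norm_num, ?_⟩⟩
        rw [hi, hqr, h5]; push_cast; ring
    · refine ⟨Sum.inr ((5*q+4 : ℕ) : ZMod m), hBVmem q (by omega), ⟨1, by norm_num, ?_⟩⟩
      rw [hi, hqr, h5]; push_cast; ring
    · refine ⟨Sum.inr ((5*q+4 : ℕ) : ZMod m), hBVmem q (by omega), ⟨0, by norm_num, ?_⟩⟩
      rw [hi, hqr, h5]; push_cast; ring
  · -- v_j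
    have hvm : j.val < m := ZMod.val_lt j
    have hj : j = ((j.val : ℕ) : ZMod m) := (ZMod.natCast_zmod_val j).symm
    set q := j.val / 5 with hq
    have hr5 : j.val % 5 = 0 ∨ j.val % 5 = 1 ∨ j.val % 5 = 2 ∨ j.val % 5 = 3 ∨ j.val % 5 = 4 := by
      omega
    have hqr : j.val = 5*q + j.val % 5 := by omega
    rcases hr5 with h5 | h5 | h5 | h5 | h5
    · refine ⟨Sum.inl ((5*q : ℕ) : ZMod m), hAUmem q (by omega), ⟨0, by norm_num, ?_⟩⟩
      rw [hj, hqr, h5]; push_cast; ring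
    · refine ⟨Sum.inl ((5*q : ℕ) : ZMod m), hAUmem q (by omega), ⟨1, by norm_num, ?_⟩⟩
      rw [hj, hqr, h5]; push_cast; ring
    · by_cases hq0 : q = 0
      · refine ⟨Sum.inl ((5*t : ℕ) : ZMod m), hAUmem t le_rfl, ⟨2, by norm_num, ?_⟩⟩
        rw [hj, hqr, h5, hq0]; push_cast; linear_combination -hm0
      · refine ⟨Sum.inl ((5*(q-1) : ℕ) : ZMod m), hAUmem (q-1) (by omega), ⟨3, by norm_num, ?_⟩⟩
        rw [hj, hqr, h5, show 5*q+2 = 5*(q-1)+7 by omega]; push_cast; ring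
    · refine ⟨Sum.inl ((5*q : ℕ) : ZMod m), hAUmem q (by omega), ⟨2, by norm_num, ?_⟩⟩
      rw [hj, hqr, h5]; push_cast; ring
    · exfalso
      apply hv
      have hjeq : j = ((5*q+4 : ℕ) : ZMod m) := by rw [hj, hqr, h5]
      rw [hjeq]
      exact Finset.mem_coe.2 (hBVmem q (by omega))


theorem domination_knodel_mod2 (n : ℕ) (h : 22 ≤ n) (hmod : n % 10 = 2) :
    dominationNumber (knodel 4 (n / 2)) = 2 * (n / 10) + 2 := by
  set t := n / 10 with hts
  set m := n / 2 with hms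
  have hm : m = 5*t+1 := by omega
  have ht : 2 ≤ t := by omega
  obtain ⟨D, hfin, hcard, hdom⟩ := ub m t hm ht
  have hmem : (2*t+2 : ℕ) ∈ {k | ∃ D : Set (ZMod m ⊕ ZMod m),
      D.Finite ∧ D.ncard = k ∧ IsDominatingSet (knodel 4 m) D} := ⟨D, hfin, hcard, hdom⟩
  apply le_antisymm
  · exact Nat.sInf_le hmem
  · apply le_csInf ⟨_, hmem⟩
    rintro k ⟨D', hfin', rfl, hdom'⟩
    exact lb m t hm ht D' hdom'
end

section
/- For every even integer n ≥ 24 with n ≡ 4 (mod 10), the domination number of W_{4,n} equals 2⌊n/10⌋ + 2. -/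
lemma knodel_upper (m t : ℕ) (ht : 2 ≤ t) (hm : m = 5*t+2) :
    ∃ D : Set (ZMod m ⊕ ZMod m), D.Finite ∧ D.ncard = 2*t+2 ∧
      IsDominatingSet (knodel 4 m) D := by
  haveI : NeZero m := ⟨by omega⟩
  have hinj : ∀ i ≤ t, ∀ i' ≤ t, ((5*i : ℕ) : ZMod m) = ((5*i' : ℕ) : ZMod m) → i = i' := by
    intro i hi i' hi' h
    have h2 := congrArg ZMod.val h
    rw [ZMod.val_cast_of_lt (by omega), ZMod.val_cast_of_lt (by omega)] at h2
    omega
  refine ⟨(fun i => Sum.inl ((5*i : ℕ) : ZMod m)) '' (Set.Iic t) ∪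
          (fun i => Sum.inr ((5*i+4 : ℕ) : ZMod m)) '' (Set.Iic t), ?_, ?_, ?_⟩
  · exact ((Set.finite_Iic t).image _).union ((Set.finite_Iic t).image _)
  · have hdisj : Disjoint ((fun i => (Sum.inl ((5*i : ℕ) : ZMod m) : ZMod m ⊕ ZMod m)) '' (Set.Iic t))
        ((fun i => (Sum.inr ((5*i+4 : ℕ) : ZMod m) : ZMod m ⊕ ZMod m)) '' (Set.Iic t)) := by
      rw [Set.disjoint_left]
      rintro x ⟨i, hi, rfl⟩ ⟨i', hi', h⟩
      exact absurd h (by simp)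
    rw [Set.ncard_union_eq hdisj ((Set.finite_Iic t).image _) ((Set.finite_Iic t).image _)]
    have hiic : (Set.Iic t).ncard = t + 1 := by
      rw [← Finset.coe_Iic, Set.ncard_coe_finset, Nat.card_Iic]
    rw [Set.ncard_image_of_injOn, Set.ncard_image_of_injOn, hiic]
    · ring
    · intro i hi i' hi' h
      simp only [Sum.inr.injEq] at h
      have : ((5*i : ℕ) : ZMod m) = ((5*i' : ℕ) : ZMod m) := by
        have : ((5*i : ℕ) : ZMod m) + 4 = ((5*i' : ℕ) : ZMod m) + 4 := by
          push_cast at h ⊢; linear_combination h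
        exact add_right_cancel this
      exact hinj i hi i' hi' this
    · intro i hi i' hi' h
      simp only [Sum.inl.injEq] at h
      exact hinj i hi i' hi' h
  · intro v hv
    rcases v with x | x
    · -- inl x : needs x ∈ D_U (contradiction) or neighbor in D_V
      have hx : x.val < m := ZMod.val_lt x
      have hxc : ((x.val : ℕ) : ZMod m) = x := by rw [ZMod.natCast_val, ZMod.cast_id]
      obtain ⟨q, r, hr5, hqr⟩ : ∃ q r, r < 5 ∧ x.val = 5*q + r :=
        ⟨x.val/5, x.val%5, by omega, by omega⟩
      rcases (show r = 0 ∨ r = 1 ∨ r = 2 ∨ r = 3 ∨ r = 4 by omega) with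
        h5 | h5 | h5 | h5 | h5
      · -- x = 5q ∈ D_U, contradiction with hv
        exact absurd (Or.inl ⟨q, Set.mem_Iic.2 (by omega), by rw [Sum.inl.injEq, ← hxc]; congr 1; omega⟩) hv
      · -- neighbor v_{5q+4}, k = 2 : j = x + 2^2 - 1
        refine ⟨Sum.inr ((5*q+4 : ℕ) : ZMod m), Or.inr ⟨q, Set.mem_Iic.2 (by omega), rfl⟩, ⟨2, by norm_num, ?_⟩⟩
        rw [← hxc, show x.val = 5*q+1 by omega]
        push_cast; ring
      · -- x = 5q+2, q ≤ t-1 : neighbor v_{5(q+1)+4} = x + 7, k = 3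
        refine ⟨Sum.inr ((5*(q+1)+4 : ℕ) : ZMod m), Or.inr ⟨q+1, Set.mem_Iic.2 (by omega), rfl⟩,
          ⟨3, by norm_num, ?_⟩⟩
        rw [← hxc, show x.val = 5*q+2 by omega]
        push_cast; ring
      · -- x = 5q+3 : neighbor v_{5q+4} = x + 1, k = 1
        refine ⟨Sum.inr ((5*q+4 : ℕ) : ZMod m), Or.inr ⟨q, Set.mem_Iic.2 (by omega), rfl⟩, ⟨1, by norm_num, ?_⟩⟩
        rw [← hxc, show x.val = 5*q+3 by omega]
        push_cast; ring
      · -- x = 5q+4 : neighbor v_{5q+4} = x, k = 0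
        refine ⟨Sum.inr ((5*q+4 : ℕ) : ZMod m), Or.inr ⟨q, Set.mem_Iic.2 (by omega), rfl⟩, ⟨0, by norm_num, ?_⟩⟩
        rw [← hxc, show x.val = 5*q+4 by omega]
        push_cast; ring
    · -- inr x
      have hx : x.val < m := ZMod.val_lt x
      have hxc : ((x.val : ℕ) : ZMod m) = x := by rw [ZMod.natCast_val, ZMod.cast_id]
      obtain ⟨q, r, hr5, hqr⟩ : ∃ q r, r < 5 ∧ x.val = 5*q + r :=
        ⟨x.val/5, x.val%5, by omega, by omega⟩
      rcases (show r = 0 ∨ r = 1 ∨ (r = 2 ∧ q = 0) ∨ (r = 2 ∧ 1 ≤ q)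
          ∨ r = 3 ∨ r = 4 by omega) with h5 | h5 | ⟨h5, hq0⟩ | ⟨h5, hq1⟩ | h5 | h5
      · -- x = 5q : dominated by u_{5q}, k = 0
        refine ⟨Sum.inl ((5*q : ℕ) : ZMod m), Or.inl ⟨q, Set.mem_Iic.2 (by omega), rfl⟩, ⟨0, by norm_num, ?_⟩⟩
        rw [← hxc, show x.val = 5*q by omega]
        push_cast; ring
      · -- x = 5q+1 : u_{5q}, k = 1
        refine ⟨Sum.inl ((5*q : ℕ) : ZMod m), Or.inl ⟨q, Set.mem_Iic.2 (by omega), rfl⟩, ⟨1, by norm_num, ?_⟩⟩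
        rw [← hxc, show x.val = 5*q+1 by omega]
        push_cast; ring
      · -- x = 2 : x ∈ D_V (i = t since 5t+4 ≡ 2 mod m), contradiction
        refine absurd (Or.inr ⟨t, Set.mem_Iic.2 (le_refl t), ?_⟩) hv
        rw [Sum.inr.injEq, ← hxc, show (5*t+4 : ℕ) = m + 2 by omega,
          show x.val = 2 by omega]
        push_cast [ZMod.natCast_self]
        ring
      · -- x = 5q+2, q ≥ 1 : u_{5(q-1)}, k = 3: x = 5(q-1) + 7
        refine ⟨Sum.inl ((5*(q-1) : ℕ) : ZMod m), Or.inl ⟨q-1, Set.mem_Iic.2 (by omega), rfl⟩,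
          ⟨3, by norm_num, ?_⟩⟩
        rw [← hxc, show x.val = 5*(q-1)+7 by omega]
        push_cast; ring
      · -- x = 5q+3 : u_{5q}, k = 2
        refine ⟨Sum.inl ((5*q : ℕ) : ZMod m), Or.inl ⟨q, Set.mem_Iic.2 (by omega), rfl⟩, ⟨2, by norm_num, ?_⟩⟩
        rw [← hxc, show x.val = 5*q+3 by omega]
        push_cast; ring
      · -- x = 5q+4 ∈ D_V, contradiction
        exact absurd (Or.inr ⟨q, Set.mem_Iic.2 (by omega), by rw [Sum.inr.injEq, ← hxc]; congr 1; omega⟩) hv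

lemma knodel_lower (m t : ℕ) (ht : 2 ≤ t) (hm : m = 5*t+2)
    (D : Set (ZMod m ⊕ ZMod m)) (hfin : D.Finite) (hdom : IsDominatingSet (knodel 4 m) D) :
    2*t+2 ≤ D.ncard := by
  classical
  haveI : NeZero m := ⟨by omega⟩
  set A : Finset (ZMod m) := Finset.univ.filter (fun i => Sum.inl i ∈ D) with hA
  set B : Finset (ZMod m) := Finset.univ.filter (fun j => Sum.inr j ∈ D) with hB
  set C : Finset (ZMod m) := (Finset.range 4).image (fun k => (2 : ZMod m)^k - 1) with hC
  have hCcard : C.card ≤ 4 := le_trans Finset.card_image_le (by simp)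
  -- claim 1 : m ≤ |A| + 4|B|
  have h1 : m ≤ A.card + 4 * B.card := by
    have hsub : (Finset.univ : Finset (ZMod m)) ⊆
        A ∪ B.biUnion (fun j => C.image (fun c => j - c)) := by
      intro i _
      by_cases hiA : i ∈ A
      · exact Finset.mem_union_left _ hiA
      · have hiD : Sum.inl i ∉ D := by simp [hA] at hiA; exact hiA
        obtain ⟨u, huD, hadj⟩ := hdom _ hiD
        rcases u with w | w
        · exact hadj.elim
        · obtain ⟨k, hk, hw⟩ := hadj
          refine Finset.mem_union_right _ (Finset.mem_biUnion.2 ⟨w, by simp [hB, huD], ?_⟩)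
          refine Finset.mem_image.2 ⟨(2:ZMod m)^k - 1,
            Finset.mem_image.2 ⟨k, Finset.mem_range.2 hk, rfl⟩, ?_⟩
          rw [hw]; ring
    calc m = (Finset.univ : Finset (ZMod m)).card := by rw [Finset.card_univ, ZMod.card]
      _ ≤ (A ∪ B.biUnion (fun j => C.image (fun c => j - c))).card := Finset.card_le_card hsub
      _ ≤ A.card + (B.biUnion (fun j => C.image (fun c => j - c))).card := Finset.card_union_le _ _
      _ ≤ A.card + ∑ j ∈ B, (C.image (fun c => j - c)).card :=
          Nat.add_le_add_left (Finset.card_biUnion_le) _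
      _ ≤ A.card + ∑ _j ∈ B, 4 := by
          refine Nat.add_le_add_left (Finset.sum_le_sum fun j _ => ?_) _
          exact le_trans Finset.card_image_le hCcard
      _ = A.card + 4 * B.card := by rw [Finset.sum_const, smul_eq_mul, Nat.mul_comm]
  -- claim 2 : m ≤ 4|A| + |B|
  have h2 : m ≤ 4 * A.card + B.card := by
    have hsub : (Finset.univ : Finset (ZMod m)) ⊆
        B ∪ A.biUnion (fun i => C.image (fun c => i + c)) := by
      intro j _
      by_cases hjB : j ∈ B
      · exact Finset.mem_union_left _ hjB
      · have hjD : Sum.inr j ∉ D := by simp [hB] at hjB; exact hjB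
        obtain ⟨u, huD, hadj⟩ := hdom _ hjD
        rcases u with w | w
        · obtain ⟨k, hk, hw⟩ := hadj
          refine Finset.mem_union_right _ (Finset.mem_biUnion.2 ⟨w, by simp [hA, huD], ?_⟩)
          refine Finset.mem_image.2 ⟨(2:ZMod m)^k - 1,
            Finset.mem_image.2 ⟨k, Finset.mem_range.2 hk, rfl⟩, ?_⟩
          rw [hw]; ring
        · exact hadj.elim
    calc m = (Finset.univ : Finset (ZMod m)).card := by rw [Finset.card_univ, ZMod.card]
      _ ≤ (B ∪ A.biUnion (fun i => C.image (fun c => i + c))).card := Finset.card_le_card hsub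
      _ ≤ B.card + (A.biUnion (fun i => C.image (fun c => i + c))).card := Finset.card_union_le _ _
      _ ≤ B.card + ∑ i ∈ A, (C.image (fun c => i + c)).card :=
          Nat.add_le_add_left (Finset.card_biUnion_le) _
      _ ≤ B.card + ∑ _i ∈ A, 4 := by
          refine Nat.add_le_add_left (Finset.sum_le_sum fun i _ => ?_) _
          exact le_trans Finset.card_image_le hCcard
      _ = 4 * A.card + B.card := by rw [Finset.sum_const, smul_eq_mul, Nat.mul_comm]; ring
  -- |A| + |B| ≤ ncard D
  have hab : A.card + B.card ≤ D.ncard := by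
    have hsub : ↑(A.image Sum.inl ∪ B.image Sum.inr) ⊆ D := by
      intro x hx
      simp only [Finset.coe_union, Set.mem_union, Finset.coe_image, Set.mem_image,
        Finset.mem_coe] at hx
      rcases hx with ⟨i, hi, rfl⟩ | ⟨j, hj, rfl⟩
      · simp [hA] at hi; exact hi
      · simp [hB] at hj; exact hj
    have hcard := Set.ncard_le_ncard hsub hfin
    rw [Set.ncard_coe_finset, Finset.card_union_of_disjoint, Finset.card_image_of_injective _ Sum.inl_injective,
      Finset.card_image_of_injective _ Sum.inr_injective] at hcard
    · exact hcard
    · rw [Finset.disjoint_left]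
      rintro x hx hx'
      simp only [Finset.mem_image] at hx hx'
      obtain ⟨i, _, rfl⟩ := hx
      obtain ⟨j, _, h⟩ := hx'
      exact absurd h (by simp)
  omega

theorem domination_knodel_mod4 (n : ℕ) (h : 24 ≤ n) (hmod : n % 10 = 4) :
    dominationNumber (knodel 4 (n / 2)) = 2 * (n / 10) + 2 := by
  set t := n / 10 with htdef
  set m := n / 2 with hmdef
  have ht : 2 ≤ t := by omega
  have hm : m = 5*t+2 := by omega
  unfold dominationNumber
  apply le_antisymm
  · obtain ⟨D, hfin, hcard, hdom⟩ := knodel_upper m t ht hm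
    exact Nat.sInf_le ⟨D, hfin, hcard, hdom⟩
  · apply le_csInf
    · obtain ⟨D, hfin, hcard, hdom⟩ := knodel_upper m t ht hm
      exact ⟨2*t+2, D, hfin, hcard, hdom⟩
    · rintro k ⟨D, hfin, hcard, hdom⟩
      rw [← hcard]
      exact knodel_lower m t ht hm D hfin hdom
end

section
/- The domination number of the Knödel graph W_{4,16} is 4. -/
instance knodelDec : DecidableRel (knodel 4 8).Adj := fun x y =>
  match x, y with
  | Sum.inl i, Sum.inr j =>
      decidable_of_iff (∃ k ∈ Finset.range 4, j = i + 2 ^ k - 1)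
        (by simp only [Finset.mem_range]; exact Iff.rfl)
  | Sum.inr j, Sum.inl i =>
      decidable_of_iff (∃ k ∈ Finset.range 4, j = i + 2 ^ k - 1)
        (by simp only [Finset.mem_range]; exact Iff.rfl)
  | Sum.inl _, Sum.inl _ => isFalse fun h => h
  | Sum.inr _, Sum.inr _ => isFalse fun h => h

theorem domination_knodel_16 : dominationNumber (knodel 4 8) = 4 := by
  have hmem : (4 : ℕ) ∈ {k | ∃ D : Set (ZMod 8 ⊕ ZMod 8), D.Finite ∧ D.ncard = k ∧
      IsDominatingSet (knodel 4 8) D} := by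
    refine ⟨(↑({Sum.inl 0, Sum.inl 4, Sum.inr 2, Sum.inr 6} :
      Finset (ZMod 8 ⊕ ZMod 8)) : Set (ZMod 8 ⊕ ZMod 8)), Set.toFinite _, ?_, ?_⟩
    · rw [Set.ncard_coe_finset]; decide
    · have h : ∀ v : ZMod 8 ⊕ ZMod 8,
        v ∉ ({Sum.inl 0, Sum.inl 4, Sum.inr 2, Sum.inr 6} : Finset (ZMod 8 ⊕ ZMod 8)) →
        ∃ u ∈ ({Sum.inl 0, Sum.inl 4, Sum.inr 2, Sum.inr 6} : Finset (ZMod 8 ⊕ ZMod 8)),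
          (knodel 4 8).Adj u v := by decide
      intro v hv
      obtain ⟨u, hu, hadj⟩ := h v (by simpa using hv)
      exact ⟨u, by simpa using hu, hadj⟩
  refine le_antisymm (Nat.sInf_le hmem) (le_csInf ⟨4, hmem⟩ ?_)
  rintro k ⟨D, hfin, hcard, hdom⟩
  by_contra hlt
  push_neg at hlt
  have hk3 : k ≤ 3 := by omega
  set F := hfin.toFinset with hF
  have hFcard : F.card = k := by rw [← hcard]; exact (Set.ncard_eq_toFinset_card D hfin).symm
  have hN : ∀ u : ZMod 8 ⊕ ZMod 8,
      (Finset.univ.filter (fun v => u = v ∨ (knodel 4 8).Adj u v)).card ≤ 5 := by decide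
  have hsub : (Finset.univ : Finset (ZMod 8 ⊕ ZMod 8)) ⊆
      F.biUnion (fun u => Finset.univ.filter (fun v => u = v ∨ (knodel 4 8).Adj u v)) := by
    intro v _
    by_cases hv : v ∈ D
    · exact Finset.mem_biUnion.2 ⟨v, hfin.mem_toFinset.2 hv,
        Finset.mem_filter.2 ⟨Finset.mem_univ _, Or.inl rfl⟩⟩
    · obtain ⟨u, hu, hadj⟩ := hdom v hv
      exact Finset.mem_biUnion.2 ⟨u, hfin.mem_toFinset.2 hu,
        Finset.mem_filter.2 ⟨Finset.mem_univ _, Or.inr hadj⟩⟩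
  have h16 : (16 : ℕ) ≤ 5 * k := by
    calc (16 : ℕ) = (Finset.univ : Finset (ZMod 8 ⊕ ZMod 8)).card := by decide
    _ ≤ (F.biUnion (fun u => Finset.univ.filter
          (fun v => u = v ∨ (knodel 4 8).Adj u v))).card := Finset.card_le_card hsub
    _ ≤ ∑ u ∈ F, (Finset.univ.filter (fun v => u = v ∨ (knodel 4 8).Adj u v)).card :=
          Finset.card_biUnion_le
    _ ≤ ∑ _u ∈ F, 5 := Finset.sum_le_sum fun u _ => hN u
    _ = 5 * k := by rw [Finset.sum_const, smul_eq_mul, hFcard, mul_comm]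
  omega
end

section
/- The domination number of the Knödel graph W_{4,26} is 7. -/
/-! ### Auxiliary machinery -/

lemma adj_lr (i j : ZMod 13) :
    (knodel 4 13).Adj (Sum.inl i) (Sum.inr j) ↔ (j = i ∨ j = i + 1 ∨ j = i + 3 ∨ j = i + 7) := by
  show (∃ k, k < 4 ∧ j = i + 2 ^ k - 1) ↔ _
  constructor
  · rintro ⟨k, hk, rfl⟩
    interval_cases k
    · left; ring
    · right; left; ring
    · right; right; left; ring
    · right; right; right; ring
  · rintro (rfl | rfl | rfl | rfl)
    · exact ⟨0, by norm_num, by ring⟩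
    · exact ⟨1, by norm_num, by ring⟩
    · exact ⟨2, by norm_num, by ring⟩
    · exact ⟨3, by norm_num, by ring⟩

lemma adj_rl (i j : ZMod 13) :
    (knodel 4 13).Adj (Sum.inr j) (Sum.inl i) ↔ (j = i ∨ j = i + 1 ∨ j = i + 3 ∨ j = i + 7) :=
  ((knodel 4 13).adj_comm _ _).trans (adj_lr i j)

lemma adj_ll (i j : ZMod 13) : ¬ (knodel 4 13).Adj (Sum.inl i) (Sum.inl j) := fun h => h
lemma adj_rr (i j : ZMod 13) : ¬ (knodel 4 13).Adj (Sum.inr i) (Sum.inr j) := fun h => h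

instance : DecidableRel (knodel 4 13).Adj := fun x y =>
  match x, y with
  | Sum.inl i, Sum.inr j => decidable_of_iff _ (adj_lr i j).symm
  | Sum.inr j, Sum.inl i => decidable_of_iff _ (adj_rl i j).symm
  | Sum.inl _, Sum.inl _ => isFalse (adj_ll _ _)
  | Sum.inr _, Sum.inr _ => isFalse (adj_rr _ _)

def masks : List ℕ := [1138689, 2277378, 4554756, 9109512, 18219024, 36438048, 5775424, 11550848, 23101696, 46203392, 25306112, 50612224, 34123776, 13377, 18563, 37126, 66061, 132122, 264244, 528488, 1048785, 2097570, 4195140, 8390280, 16780560, 33561120]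
def maskOf (n : ℕ) : ℕ := masks.getD n 0
def covT : List (List ℕ) := [[0, 13, 14, 16, 20], [1, 14, 15, 17, 21], [2, 15, 16, 18, 22], [3, 16, 17, 19, 23], [4, 17, 18, 20, 24], [5, 18, 19, 21, 25], [6, 13, 19, 20, 22], [7, 14, 20, 21, 23], [8, 15, 21, 22, 24], [9, 16, 22, 23, 25], [10, 13, 17, 23, 24], [11, 14, 18, 24, 25], [12, 13, 15, 19, 25], [0, 6, 10, 12, 13], [0, 1, 7, 11, 14], [1, 2, 8, 12, 15], [0, 2, 3, 9, 16], [1, 3, 4, 10, 17], [2, 4, 5, 11, 18], [3, 5, 6, 12, 19], [0, 4, 6, 7, 20], [1, 5, 7, 8, 21], [2, 6, 8, 9, 22], [3, 7, 9, 10, 23], [4, 8, 10, 11, 24], [5, 9, 11, 12, 25]]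
def cov (w : ℕ) : List ℕ := covT.getD w []
def lowZero (m : ℕ) : ℕ := ((List.range 26).find? fun i => !m.testBit i).getD 0
def search : ℕ → ℕ → Bool
  | 0, m => m == 67108863
  | p+1, m => m == 67108863 || (cov (lowZero m)).any fun v => search p (m ||| maskOf v)

set_option maxRecDepth 100000 in
set_option maxHeartbeats 10000000 in
theorem no6 : search 6 0 = false := by decide

abbrev V26 := ZMod 13 ⊕ ZMod 13

def enc : V26 → ℕ
  | Sum.inl i => i.val
  | Sum.inr j => 13 + j.val

lemma enc_lt (v : V26) : enc v < 26 := by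
  cases v with
  | inl i => exact lt_of_lt_of_le (ZMod.val_lt i) (by norm_num)
  | inr j => have := ZMod.val_lt j; simp only [enc]; omega

lemma L1 : ∀ i j : ZMod 13, ((maskOf i.val).testBit j.val ↔ i = j) := by decide
lemma L2 : ∀ i j : ZMod 13, ((maskOf i.val).testBit (13 + j.val) ↔ (j = i ∨ j = i + 1 ∨ j = i + 3 ∨ j = i + 7)) := by decide
lemma L3 : ∀ i j : ZMod 13, ((maskOf (13 + j.val)).testBit i.val ↔ (j = i ∨ j = i + 1 ∨ j = i + 3 ∨ j = i + 7)) := by decide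
lemma L4 : ∀ i j : ZMod 13, ((maskOf (13 + i.val)).testBit (13 + j.val) ↔ i = j) := by decide

lemma bridge_s9 (u w : V26) (h : u = w ∨ (knodel 4 13).Adj u w) :
    (maskOf (enc u)).testBit (enc w) = true := by
  cases u with
  | inl i =>
    cases w with
    | inl j =>
        rcases h with h | h
        · exact (L1 i j).mpr (Sum.inl.inj h)
        · exact absurd h (adj_ll i j)
    | inr j =>
        rcases h with h | h
        · exact absurd h (by simp)
        · exact (L2 i j).mpr ((adj_lr i j).mp h)
  | inr i =>
    cases w with
    | inl j =>
        rcases h with h | h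
        · exact absurd h (by simp)
        · exact (L3 j i).mpr ((adj_rl j i).mp h)
    | inr j =>
        rcases h with h | h
        · exact (L4 i j).mpr (Sum.inr.inj h)
        · exact absurd h (adj_rr i j)

def orAll : List ℕ → ℕ
  | [] => 0
  | v :: t => maskOf v ||| orAll t

lemma testBit_orAll (l : List ℕ) (i : ℕ) :
    (orAll l).testBit i = l.any fun v => (maskOf v).testBit i := by
  induction l with
  | nil => simp [orAll]
  | cons v t ih => simp [orAll, Nat.testBit_or, ih]

lemma maskOf_lt (v : ℕ) : maskOf v < 2 ^ 26 := by
  by_cases h : v < 26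
  · have : ∀ v : Fin 26, maskOf v.val < 2 ^ 26 := by decide
    exact this ⟨v, h⟩
  · show masks.getD v 0 < 2 ^ 26
    rw [List.getD_eq_default _ _ (by simp [masks]; omega)]
    norm_num

lemma orAll_lt (l : List ℕ) : orAll l < 2 ^ 26 := by
  induction l with
  | nil => simp [orAll]
  | cons v t ih => exact Nat.or_lt_two_pow (maskOf_lt v) ih

lemma orAll_perm {l l' : List ℕ} (h : l.Perm l') : orAll l = orAll l' := by
  induction h with
  | nil => rfl
  | cons x _ ih => simp [orAll, ih]
  | swap x y l =>
      show maskOf y ||| (maskOf x ||| orAll l) = maskOf x ||| (maskOf y ||| orAll l)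
      rw [← Nat.or_assoc, ← Nat.or_assoc, Nat.or_comm (maskOf y) (maskOf x)]
  | trans _ _ ih1 ih2 => rw [ih1, ih2]

lemma cov_mem : ∀ w : Fin 26, ∀ v : Fin 26, (maskOf v.val).testBit w.val → v.val ∈ cov w.val := by decide

lemma aux : ∀ p m, search p m = false → m < 2 ^ 26 →
    ∀ l : List ℕ, l.length ≤ p → (∀ x ∈ l, x < 26) → m ||| orAll l ≠ 67108863 := by
  intro p
  induction p with
  | zero =>
      intro m hs _ l hl _
      have : l = [] := List.eq_nil_of_length_eq_zero (Nat.le_zero.mp hl)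
      subst this
      simpa [orAll] using fun h => absurd (beq_iff_eq.mpr h) (by simp [search] at hs; simp [hs])
  | succ p ih =>
      intro m hs hm l hl hlt hfull
      rw [search, Bool.or_eq_false_iff] at hs
      obtain ⟨hne, hany⟩ := hs
      have hmne : m ≠ 67108863 := fun h => by simp [h] at hne
      set w := lowZero m with hw
      have hfind : ∃ i ∈ List.range 26, (fun i => !m.testBit i) i = true := by
        by_contra hc
        push_neg at hc
        apply hmne
        apply Nat.eq_of_testBit_eq
        intro i
        by_cases hi : i < 26
        · have := hc i (List.mem_range.mpr hi)
          simp at this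
          rw [this]
          have : (67108863 : ℕ) = 2 ^ 26 - 1 := by norm_num
          rw [this, Nat.testBit_two_pow_sub_one]
          simp [hi]
        · have hpow : (2:ℕ) ^ 26 ≤ 2 ^ i := Nat.pow_le_pow_right (by norm_num) (by omega)
          rw [Nat.testBit_eq_false_of_lt (lt_of_lt_of_le hm hpow),
              Nat.testBit_eq_false_of_lt (lt_of_lt_of_le (by norm_num : (67108863:ℕ) < 2 ^ 26) hpow)]
      obtain ⟨w', hw'mem, hw'p⟩ := hfind
      have hwfind : (List.range 26).find? (fun i => !m.testBit i) ≠ none := by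
        intro hnone
        exact absurd hw'p (by simpa using List.find?_eq_none.mp hnone w' hw'mem)
      obtain ⟨w0, hw0⟩ := Option.ne_none_iff_exists'.mp hwfind
      have hwp := List.find?_some (p := fun i => !m.testBit i) hw0
      have hwmem : w0 < 26 := List.mem_range.mp (List.mem_of_find?_eq_some hw0)
      have hwval : w = w0 := by rw [hw, lowZero, hw0]; rfl
      have hbitfull : (m ||| orAll l).testBit w0 = true := by
        rw [hfull]
        have h26 : (67108863 : ℕ) = 2 ^ 26 - 1 := by norm_num
        rw [h26, Nat.testBit_two_pow_sub_one]
        simpa using hwmem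
      rw [Nat.testBit_or, Bool.or_eq_true] at hbitfull
      rcases hbitfull with hb | hb
      · rw [Bool.not_eq_true'] at hwp; rw [hwp] at hb; exact Bool.false_ne_true hb
      · rw [testBit_orAll, List.any_eq_true] at hb
        obtain ⟨v, hvl, hvb⟩ := hb
        have hv26 : v < 26 := hlt v hvl
        have hvcov : v ∈ cov w0 := cov_mem ⟨w0, hwmem⟩ ⟨v, hv26⟩ hvb
        rw [← hwval] at hvcov
        have hsv : search p (m ||| maskOf v) = false := by
          rw [List.any_eq_false] at hany
          exact Bool.eq_false_iff.mpr (hany v hvcov)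
        have hperm : l.Perm (v :: l.erase v) := List.perm_cons_erase hvl
        have horall : orAll l = maskOf v ||| orAll (l.erase v) := orAll_perm hperm
        refine ih (m ||| maskOf v) hsv (Nat.or_lt_two_pow hm (maskOf_lt v)) (l.erase v)
          ?_ (fun x hx => hlt x (List.mem_of_mem_erase hx)) ?_
        · have := List.length_erase_of_mem hvl
          omega
        · rw [Nat.or_assoc, ← horall, hfull]

/-- The explicit dominating set of size 7. -/
def D7 : Finset V26 :=
  {Sum.inl 0, Sum.inl 1, Sum.inl 2, Sum.inl 3, Sum.inr 7, Sum.inr 11, Sum.inr 12}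

lemma D7_card : D7.card = 7 := by decide
lemma D7_dom : ∀ v : V26, ∃ u ∈ D7, u = v ∨ (knodel 4 13).Adj u v := by decide

theorem domination_knodel_26 : dominationNumber (knodel 4 13) = 7 := by
  have h7 : 7 ∈ {k | ∃ D : Set V26, D.Finite ∧ D.ncard = k ∧ IsDominatingSet (knodel 4 13) D} := by
    refine ⟨↑D7, D7.finite_toSet, by rw [Set.ncard_coe_finset, D7_card], ?_⟩
    intro v hv
    obtain ⟨u, hu, heq | hadj⟩ := D7_dom v
    · exact absurd (heq ▸ Finset.mem_coe.mpr hu) hv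
    · exact ⟨u, Finset.mem_coe.mpr hu, hadj⟩
  have hlb : ∀ k ∈ {k | ∃ D : Set V26, D.Finite ∧ D.ncard = k ∧ IsDominatingSet (knodel 4 13) D},
      7 ≤ k := by
    intro k hk
    by_contra hk6
    push_neg at hk6
    obtain ⟨D, hfin, hcard, hdom⟩ := hk
    set F := hfin.toFinset with hF
    set l := F.toList.map enc with hl
    have hlen : l.length = k := by
      rw [hl, List.length_map, Finset.length_toList]
      rw [Set.ncard_eq_toFinset_card D hfin] at hcard
      exact hcard
    have hmem : ∀ x ∈ l, x < 26 := by
      rintro x hx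
      obtain ⟨w, _, rfl⟩ := List.mem_map.mp hx
      exact enc_lt w
    have hfull : orAll l = 67108863 := by
      apply Nat.eq_of_testBit_eq
      intro i
      by_cases hi : i < 26
      · have h26 : (67108863 : ℕ) = 2 ^ 26 - 1 := by norm_num
        rw [h26, Nat.testBit_two_pow_sub_one]
        -- decode i as a vertex
        obtain ⟨w, hw⟩ : ∃ w : V26, enc w = i := by
          rcases lt_or_ge i 13 with h13 | h13
          · exact ⟨Sum.inl (i : ZMod 13), ZMod.val_cast_of_lt h13⟩
          · refine ⟨Sum.inr ((i - 13 : ℕ) : ZMod 13), ?_⟩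
            show 13 + ZMod.val _ = i
            rw [ZMod.val_cast_of_lt (by omega)]
            omega
        have hcov : ∃ u ∈ D, u = w ∨ (knodel 4 13).Adj u w := by
          by_cases hwD : w ∈ D
          · exact ⟨w, hwD, Or.inl rfl⟩
          · obtain ⟨u, huD, hadj⟩ := hdom w hwD
            exact ⟨u, huD, Or.inr hadj⟩
        obtain ⟨u, huD, hor⟩ := hcov
        have hbit := bridge_s9 u w hor
        have hul : enc u ∈ l := by
          rw [hl]
          exact List.mem_map.mpr ⟨u, Finset.mem_toList.mpr (hfin.mem_toFinset.mpr huD), rfl⟩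
        rw [testBit_orAll]
        simp only [hi, decide_true]
        exact List.any_eq_true.mpr ⟨enc u, hul, hw ▸ hbit⟩
      · have hpow : (2:ℕ) ^ 26 ≤ 2 ^ i := Nat.pow_le_pow_right (by norm_num) (by omega)
        rw [Nat.testBit_eq_false_of_lt (lt_of_lt_of_le (orAll_lt l) hpow),
            Nat.testBit_eq_false_of_lt (lt_of_lt_of_le (by norm_num : (67108863:ℕ) < 2 ^ 26) hpow)]
    have := aux 6 0 no6 (by norm_num) l (by omega) hmem
    rw [Nat.zero_or] at this
    exact this hfull
  exact le_antisymm (Nat.sInf_le h7) (le_csInf ⟨7, h7⟩ hlb)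
end

section
/- The domination number of the Knödel graph W_{4,28} is 7. -/
namespace Knodel28

abbrev V : Type := ZMod 14 ⊕ ZMod 14

instance adjDec : DecidableRel (knodel 4 14).Adj := fun x y =>
  match x, y with
  | .inl i, .inr j => inferInstanceAs (Decidable (∃ k, k < 4 ∧ j = i + 2 ^ k - 1))
  | .inr j, .inl i => inferInstanceAs (Decidable (∃ k, k < 4 ∧ j = i + 2 ^ k - 1))
  | .inl _, .inl _ => .isFalse fun h => h
  | .inr _, .inr _ => .isFalse fun h => h

def idx : V → ℕ
  | .inl i => i.val
  | .inr j => 14 + j.val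

def nbMask : ℕ → ℕ
  | 0 => 2277377
  | 1 => 4554754
  | 2 => 9109508
  | 3 => 18219016
  | 4 => 36438032
  | 5 => 72876064
  | 6 => 145752128
  | 7 => 23085184
  | 8 => 46170368
  | 9 => 92340736
  | 10 => 184681472
  | 11 => 100943872
  | 12 => 201887744
  | 13 => 135356416
  | 14 => 26753
  | 15 => 37123
  | 16 => 74246
  | 17 => 132109
  | 18 => 264218
  | 19 => 528436
  | 20 => 1056872
  | 21 => 2097361
  | 22 => 4194722
  | 23 => 8389444
  | 24 => 16778888
  | 25 => 33557776
  | 26 => 67115552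
  | 27 => 134231104
  | _ => 0

def pmasks : List (ℕ × ℕ) := [(2277377, 268435455), (4554754, 268435455), (9109508, 268435455), (18219016, 268435455), (36438032, 268435455), (72876064, 268435455), (145752128, 268435455), (23085184, 268435455), (46170368, 268435455), (92340736, 268435455), (184681472, 268435455), (100943872, 268435455), (201887744, 268435455), (135356416, 268435455), (26753, 268435455), (37123, 268419071), (74246, 268386303), (132109, 268320767), (264218, 268189695), (528436, 267927551), (1056872, 267403263), (2097361, 266354687), (4194722, 264257534), (8389444, 260063228), (16778888, 251674616), (33557776, 234897264), (67115552, 201342560), (134231104, 134231104)]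

def sor (l : List ℕ) : ℕ := l.foldr (· ||| ·) 0

def sorOK : List (ℕ × ℕ) → Bool
  | [] => true
  | (m, s) :: ms => (s == (m ||| sor (ms.map Prod.fst))) && sorOK ms

def good : ℕ → ℕ → List (ℕ × ℕ) → Bool
  | _, acc, [] => acc == 268435455
  | 0, acc, _ :: _ => acc == 268435455
  | k+1, acc, (m, s) :: ms =>
      ((acc ||| s) == 268435455) && (good (k+1) acc ms || good k (acc ||| m) ms)

set_option maxRecDepth 100000 in
set_option maxHeartbeats 10000000 in
theorem goodfalse : good 6 0 pmasks = false := by decide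

theorem sorOK_pmasks : sorOK pmasks = true := by decide

lemma testBit_sor {l : List ℕ} {i : ℕ} :
    (sor l).testBit i = true ↔ ∃ x ∈ l, x.testBit i = true := by
  induction l with
  | nil => simp [sor]
  | cons a l ih =>
      simp only [sor, List.foldr_cons] at *
      simp [Nat.testBit_lor, Bool.or_eq_true, ih]

lemma sor_lt {l : List ℕ} (h : ∀ x ∈ l, x < 2 ^ 28) : sor l < 2 ^ 28 := by
  induction l with
  | nil => simp [sor]
  | cons a l ih =>
      simp only [sor, List.foldr_cons]
      exact Nat.or_lt_two_pow (h a List.mem_cons_self)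
        (ih fun x hx => h x (List.mem_cons_of_mem a hx))

lemma eq_full {x : ℕ} (hx : x < 2 ^ 28) (h : ∀ i < 28, x.testBit i = true) :
    x = 268435455 := by
  have hf : (268435455 : ℕ) = 2 ^ 28 - 1 := by norm_num
  apply Nat.eq_of_testBit_eq
  intro i
  rw [hf, Nat.testBit_two_pow_sub_one]
  by_cases hi : i < 28
  · simp [hi, h i hi]
  · simp only [hi, decide_false]
    exact Nat.testBit_lt_two_pow
      (hx.trans_le (Nat.pow_le_pow_right (by norm_num) (Nat.le_of_not_lt hi)))

lemma testBit_full {i : ℕ} (hi : i < 28) : (268435455 : ℕ).testBit i = true := by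
  have hf : (268435455 : ℕ) = 2 ^ 28 - 1 := by norm_num
  rw [hf, Nat.testBit_two_pow_sub_one]
  simp [hi]

lemma good_sound : ∀ (ps : List (ℕ × ℕ)) (k acc : ℕ) (l : List ℕ),
    sorOK ps = true → (∀ x ∈ ps.map Prod.fst, x < 2 ^ 28) → acc < 2 ^ 28 →
    l.Sublist (ps.map Prod.fst) → l.length ≤ k → sor l ||| acc = 268435455 →
    good k acc ps = true := by
  intro ps
  induction ps with
  | nil =>
      intro k acc l _ _ _ hsub _ hfull
      have hl : l = [] := List.sublist_nil.mp hsub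
      subst hl
      simp only [sor, List.foldr_nil, Nat.zero_or] at hfull
      cases k <;> simp [good, hfull]
  | cons p ps ih =>
      obtain ⟨m, s⟩ := p
      intro k acc l hok hlt hacc hsub hlen hfull
      simp only [sorOK, Bool.and_eq_true, beq_iff_eq] at hok
      obtain ⟨hs, hok⟩ := hok
      have hm : m < 2 ^ 28 := hlt m (by simp)
      have hrest : ∀ x ∈ ps.map Prod.fst, x < 2 ^ 28 := fun x hx =>
        hlt x (by simp [hx])
      cases k with
      | zero =>
          have hl : l = [] := List.eq_nil_of_length_eq_zero (Nat.le_zero.mp hlen)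
          subst hl
          simp only [sor, List.foldr_nil, Nat.zero_or] at hfull
          simp [good, hfull]
      | succ k =>
          have hsubset : ∀ x ∈ l, x = m ∨ x ∈ ps.map Prod.fst := by
            intro x hx
            have := hsub.subset hx
            simpa using this
          have hcond : acc ||| s = 268435455 := by
            apply eq_full
            · exact Nat.or_lt_two_pow hacc (by
                rw [hs]; exact Nat.or_lt_two_pow hm (sor_lt hrest))
            · intro i hi
              have h1 : ((sor l).testBit i || acc.testBit i) = true := by
                rw [← Nat.testBit_lor, hfull]; exact testBit_full hi
              rw [Nat.testBit_lor]
              rcases Bool.or_eq_true_iff.mp h1 with h2 | h2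
              · obtain ⟨x, hxl, hxb⟩ := testBit_sor.mp h2
                rcases hsubset x hxl with rfl | hx
                · rw [hs]
                  simp [Nat.testBit_lor, hxb]
                · rw [hs]
                  have : (sor (ps.map Prod.fst)).testBit i = true :=
                    testBit_sor.mpr ⟨x, hx, hxb⟩
                  simp [Nat.testBit_lor, this]
              · simp [h2]
          have hgood : good (k+1) acc ps = true ∨ good k (acc ||| m) ps = true := by
            rcases List.sublist_cons_iff.mp (by simpa using hsub) with h | ⟨r, rfl, hr⟩
            · exact Or.inl (ih (k+1) acc l hok hrest hacc h hlen hfull)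
            · refine Or.inr (ih k (acc ||| m) r hok hrest
                (Nat.or_lt_two_pow hacc hm) hr (by simpa using hlen) ?_)
              have : sor (m :: r) ||| acc = sor r ||| (acc ||| m) := by
                simp only [sor, List.foldr_cons]
                rw [Nat.lor_comm m, Nat.lor_assoc, Nat.lor_comm m acc]
              rw [← this]
              exact hfull
          show good (k+1) acc ((m, s) :: ps) = true
          simp only [good, hcond, beq_self_eq_true, Bool.true_and, Bool.or_eq_true]
          exact hgood

def cov (u v : V) : Prop := u = v ∨ (knodel 4 14).Adj u v

instance : DecidableRel cov := fun u v =>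
  inferInstanceAs (Decidable (_ ∨ _))

lemma cov_iff : ∀ u v : V, cov u v ↔ (nbMask (idx u)).testBit (idx v) = true := by
  decide

lemma nbMask_mem : ∀ u : V, nbMask (idx u) ∈ pmasks.map Prod.fst := by decide

lemma masks_lt : ∀ x ∈ pmasks.map Prod.fst, x < 2 ^ 28 := by decide

lemma nbMask_inj : ∀ u w : V, nbMask (idx u) = nbMask (idx w) → u = w := by decide

lemma idx_surj : ∀ i : Fin 28, ∃ u : V, idx u = i.val := by decide

lemma sor_perm {l₁ l₂ : List ℕ} (h : l₁.Perm l₂) : sor l₁ = sor l₂ := by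
  apply Nat.eq_of_testBit_eq
  intro i
  rw [Bool.eq_iff_iff, testBit_sor, testBit_sor]
  exact ⟨fun ⟨x, hx, hb⟩ => ⟨x, h.mem_iff.mp hx, hb⟩,
         fun ⟨x, hx, hb⟩ => ⟨x, h.mem_iff.mpr hx, hb⟩⟩

lemma lower (D : Set V) (hfin : D.Finite) (hdom : IsDominatingSet (knodel 4 14) D) :
    7 ≤ D.ncard := by
  by_contra hcon
  push_neg at hcon
  set F : Finset V := hfin.toFinset with hF
  set l : List ℕ := F.toList.map (fun u => nbMask (idx u)) with hl
  have hnodup : l.Nodup := by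
    refine (Finset.nodup_toList F).map ?_
    intro a b hab
    exact nbMask_inj a b hab
  have hsubset : ∀ x ∈ l, x ∈ pmasks.map Prod.fst := by
    intro x hx
    obtain ⟨u, _, rfl⟩ := List.mem_map.mp hx
    exact nbMask_mem u
  obtain ⟨l', hperm, hsub⟩ := hnodup.subperm hsubset
  have hsorl : sor l = 268435455 := by
    apply eq_full (sor_lt fun x hx => masks_lt x (hsubset x hx))
    intro i hi
    obtain ⟨u, hu⟩ := idx_surj ⟨i, hi⟩
    have hc : ∃ w ∈ F, cov w u := by
      by_cases hmem : u ∈ D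
      · exact ⟨u, hfin.mem_toFinset.mpr hmem, Or.inl rfl⟩
      · obtain ⟨w, hwD, hadj⟩ := hdom u hmem
        exact ⟨w, hfin.mem_toFinset.mpr hwD, Or.inr hadj⟩
    obtain ⟨w, hwF, hcov⟩ := hc
    apply testBit_sor.mpr
    refine ⟨nbMask (idx w), List.mem_map.mpr ⟨w, Finset.mem_toList.mpr hwF, rfl⟩, ?_⟩
    have hu' : idx u = i := hu
    rw [← hu']
    exact (cov_iff w u).mp hcov
  have hsorl' : sor l' = 268435455 := by
    rw [sor_perm hperm, hsorl]
  have hlen : l'.length ≤ 6 := by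
    rw [hperm.length_eq, hl, List.length_map, Finset.length_toList, hF,
      ← Set.ncard_eq_toFinset_card D hfin]
    omega
  have := good_sound pmasks 6 0 l' sorOK_pmasks masks_lt (by norm_num) hsub hlen
    (by rw [Nat.or_zero, hsorl'])
  rw [goodfalse] at this
  exact Bool.false_ne_true this

def F7 : Finset V :=
  {Sum.inl 0, Sum.inl 1, Sum.inl 2, Sum.inl 5, Sum.inr 10, Sum.inr 11, Sum.inr 13}

lemma F7_dom : ∀ v : V, v ∈ F7 ∨ ∃ u ∈ F7, (knodel 4 14).Adj u v := by decide

lemma F7_card : F7.card = 7 := by decide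

end Knodel28

theorem domination_knodel_28 : dominationNumber (knodel 4 14) = 7 := by
  open Knodel28 in
  have h7 : 7 ∈ {k | ∃ D : Set Knodel28.V, D.Finite ∧ D.ncard = k ∧
      IsDominatingSet (knodel 4 14) D} := by
    refine ⟨↑Knodel28.F7, Knodel28.F7.finite_toSet, ?_, ?_⟩
    · rw [Set.ncard_coe_finset]; exact Knodel28.F7_card
    · intro v hv
      rcases Knodel28.F7_dom v with h | ⟨u, hu, hadj⟩
      · exact absurd (Finset.mem_coe.mpr h) hv
      · exact ⟨u, Finset.mem_coe.mpr hu, hadj⟩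
  apply le_antisymm
  · exact Nat.sInf_le h7
  · refine le_csInf ⟨7, h7⟩ ?_
    rintro k ⟨D, hfin, rfl, hdom⟩
    exact Knodel28.lower D hfin hdom
end

section
/- In W_{4,n} with n = 10t (t ≥ 2), the set D = {u_1, u_6, ..., u_{5t-4}} ∪ {v_5, v_{10}, ..., v_{5t}} (indices in arithmetic progression with common difference 5) is a dominating set of size 2t. -/
lemma val_add_mod5 (t : ℕ) [NeZero (5*t)] (i : ZMod (5*t)) (c : ℕ) :
    (i + (c : ZMod (5*t))).val % 5 = (i.val + c) % 5 := by
  rw [ZMod.val_add, ZMod.val_natCast, Nat.mod_mod_of_dvd _ ⟨t, rfl⟩, Nat.add_mod,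
    Nat.mod_mod_of_dvd _ ⟨t, rfl⟩, ← Nat.add_mod]

lemma memU (t : ℕ) (ht : 2 ≤ t) (x : ZMod (5*t)) (hx : x.val % 5 = 1) :
    ∃ j < t, x = ((5*j+1 : ℕ) : ZMod (5*t)) := by
  haveI : NeZero (5*t) := ⟨by omega⟩
  have hlt := ZMod.val_lt x
  refine ⟨x.val/5, by omega, ?_⟩
  rw [show 5*(x.val/5)+1 = x.val by omega]
  exact (ZMod.natCast_rightInverse x).symm

lemma memV (t : ℕ) (ht : 2 ≤ t) (x : ZMod (5*t)) (hx : x.val % 5 = 0) :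
    ∃ j < t, x = ((5*(j+1) : ℕ) : ZMod (5*t)) := by
  haveI : NeZero (5*t) := ⟨by omega⟩
  have hlt := ZMod.val_lt x
  by_cases h0 : x.val = 0
  · refine ⟨t-1, by omega, ?_⟩
    rw [show 5*(t-1+1) = 5*t by omega, ZMod.natCast_self]
    exact (ZMod.val_eq_zero x).mp h0
  · refine ⟨x.val/5 - 1, by omega, ?_⟩
    rw [show 5*(x.val/5-1+1) = x.val by omega]
    exact (ZMod.natCast_rightInverse x).symm

theorem dominating_set_mod0 (t : ℕ) (ht : 2 ≤ t) :
    IsDominatingSet (knodel 4 (5 * t))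
      (((fun j : ℕ => (Sum.inl ((5 * j + 1 : ℕ) : ZMod (5 * t)) :
          ZMod (5 * t) ⊕ ZMod (5 * t))) '' Set.Iio t) ∪
       ((fun j : ℕ => (Sum.inr ((5 * (j + 1) : ℕ) : ZMod (5 * t)) :
          ZMod (5 * t) ⊕ ZMod (5 * t))) '' Set.Iio t)) ∧
    (((fun j : ℕ => (Sum.inl ((5 * j + 1 : ℕ) : ZMod (5 * t)) :
          ZMod (5 * t) ⊕ ZMod (5 * t))) '' Set.Iio t) ∪
       ((fun j : ℕ => (Sum.inr ((5 * (j + 1) : ℕ) : ZMod (5 * t)) :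
          ZMod (5 * t) ⊕ ZMod (5 * t))) '' Set.Iio t)).ncard = 2 * t := by
  haveI : NeZero (5*t) := ⟨by omega⟩
  constructor
  · rintro (i | i) hv
    · -- v = u_i, find a neighbor v_j in D
      have hne : i.val % 5 ≠ 1 := by
        intro h1
        obtain ⟨j, hj, hje⟩ := memU t ht i h1
        exact hv (Or.inl ⟨j, hj, congrArg Sum.inl hje.symm⟩)
      have hr : i.val % 5 = 0 ∨ i.val % 5 = 2 ∨ i.val % 5 = 3 ∨ i.val % 5 = 4 := by omega
      have key : ∀ k c : ℕ, k < 4 → (2:ZMod (5*t))^k - 1 = (c:ℕ) → (i.val + c) % 5 = 0 →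
          ∃ u ∈ (((fun j : ℕ => (Sum.inl ((5 * j + 1 : ℕ) : ZMod (5 * t)) :
            ZMod (5 * t) ⊕ ZMod (5 * t))) '' Set.Iio t) ∪
         ((fun j : ℕ => (Sum.inr ((5 * (j + 1) : ℕ) : ZMod (5 * t)) :
            ZMod (5 * t) ⊕ ZMod (5 * t))) '' Set.Iio t)),
          (knodel 4 (5*t)).Adj u (Sum.inl i) := by
        intro k c hk hc hmod
        obtain ⟨j, hj, hje⟩ := memV t ht (i + ((c:ℕ) : ZMod (5*t)))
          (by rw [val_add_mod5]; exact hmod)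
        refine ⟨Sum.inr (i + ((c:ℕ) : ZMod (5*t))), Or.inr ⟨j, hj, congrArg Sum.inr hje.symm⟩,
          ⟨k, hk, ?_⟩⟩
        rw [← hc]; ring
      rcases hr with h|h|h|h
      · exact key 0 0 (by norm_num) (by push_cast; ring) (by omega)
      · exact key 2 3 (by norm_num) (by push_cast; norm_num) (by omega)
      · exact key 3 7 (by norm_num) (by push_cast; norm_num) (by omega)
      · exact key 1 1 (by norm_num) (by push_cast; norm_num) (by omega)
    · -- v = v_i, find a neighbor u_j in D
      have hne : i.val % 5 ≠ 0 := by
        intro h1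
        obtain ⟨j, hj, hje⟩ := memV t ht i h1
        exact hv (Or.inr ⟨j, hj, congrArg Sum.inr hje.symm⟩)
      have hr : i.val % 5 = 1 ∨ i.val % 5 = 2 ∨ i.val % 5 = 3 ∨ i.val % 5 = 4 := by omega
      have key : ∀ k c : ℕ, k < 4 → c ≤ 7 → (2:ZMod (5*t))^k - 1 = (c:ℕ) →
          (i.val + (5*t - c)) % 5 = 1 →
          ∃ u ∈ (((fun j : ℕ => (Sum.inl ((5 * j + 1 : ℕ) : ZMod (5 * t)) :
            ZMod (5 * t) ⊕ ZMod (5 * t))) '' Set.Iio t) ∪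
         ((fun j : ℕ => (Sum.inr ((5 * (j + 1) : ℕ) : ZMod (5 * t)) :
            ZMod (5 * t) ⊕ ZMod (5 * t))) '' Set.Iio t)),
          (knodel 4 (5*t)).Adj u (Sum.inr i) := by
        intro k c hk hc7 hc hmod
        obtain ⟨j, hj, hje⟩ := memU t ht (i + ((5*t - c : ℕ) : ZMod (5*t)))
          (by rw [val_add_mod5]; exact hmod)
        refine ⟨Sum.inl (i + ((5*t - c : ℕ) : ZMod (5*t))),
          Or.inl ⟨j, hj, congrArg Sum.inl hje.symm⟩, ⟨k, hk, ?_⟩⟩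
        rw [Nat.cast_sub (by omega), ZMod.natCast_self, ← hc]; ring
      rcases hr with h|h|h|h
      · exact key 0 0 (by norm_num) (by norm_num) (by push_cast; ring) (by omega)
      · exact key 1 1 (by norm_num) (by norm_num) (by push_cast; norm_num) (by omega)
      · exact key 3 7 (by norm_num) (by norm_num) (by push_cast; norm_num) (by omega)
      · exact key 2 3 (by norm_num) (by norm_num) (by push_cast; norm_num) (by omega)
  · -- cardinality
    have hfin : (Set.Iio t : Set ℕ).Finite := Set.finite_Iio t
    have hdisj : Disjoint
        (((fun j : ℕ => (Sum.inl ((5 * j + 1 : ℕ) : ZMod (5 * t)) :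
          ZMod (5 * t) ⊕ ZMod (5 * t))) '' Set.Iio t))
        (((fun j : ℕ => (Sum.inr ((5 * (j + 1) : ℕ) : ZMod (5 * t)) :
          ZMod (5 * t) ⊕ ZMod (5 * t))) '' Set.Iio t)) := by
      rw [Set.disjoint_left]
      rintro x ⟨j, _, rfl⟩ ⟨j', _, h⟩
      simp at h
    rw [Set.ncard_union_eq hdisj (hfin.image _) (hfin.image _)]
    have hIio : (Set.Iio t : Set ℕ).ncard = t := by
      rw [← Finset.coe_Iio, Set.ncard_coe_finset]; simp
    have hU : ((fun j : ℕ => (Sum.inl ((5 * j + 1 : ℕ) : ZMod (5 * t)) :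
          ZMod (5 * t) ⊕ ZMod (5 * t))) '' Set.Iio t).ncard = t := by
      rw [Set.ncard_image_of_injOn, hIio]
      intro a ha b hb hab
      simp only [Set.mem_Iio] at ha hb
      simp only [Sum.inl.injEq] at hab
      have := congrArg ZMod.val hab
      rw [ZMod.val_natCast, ZMod.val_natCast, Nat.mod_eq_of_lt (by omega),
        Nat.mod_eq_of_lt (by omega)] at this
      omega
    have hV : ((fun j : ℕ => (Sum.inr ((5 * (j + 1) : ℕ) : ZMod (5 * t)) :
          ZMod (5 * t) ⊕ ZMod (5 * t))) '' Set.Iio t).ncard = t := by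
      rw [Set.ncard_image_of_injOn, hIio]
      intro a ha b hb hab
      simp only [Set.mem_Iio] at ha hb
      simp only [Sum.inr.injEq] at hab
      have := congrArg ZMod.val hab
      rw [ZMod.val_natCast, ZMod.val_natCast] at this
      rcases eq_or_lt_of_le (show a+1 ≤ t by omega) with h1|h1 <;>
        rcases eq_or_lt_of_le (show b+1 ≤ t by omega) with h2|h2
      · omega
      · rw [show 5*(a+1) = 5*t by omega, Nat.mod_self,
          Nat.mod_eq_of_lt (by omega)] at this
        omega
      · rw [show 5*(b+1) = 5*t by omega, Nat.mod_self,
          Nat.mod_eq_of_lt (by omega)] at this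
        omega
      · rw [Nat.mod_eq_of_lt (by omega), Nat.mod_eq_of_lt (by omega)] at this
        omega
    rw [hU, hV]; ring
end

section
/- In W_{4,n} with n = 10t + 2 (t ≥ 2), the set D = {u_1, u_6, ..., u_{5t+1}} ∪ {v_5, v_{10}, ..., v_{5t}} ∪ {v_{5t+1}} is a dominating set of size 2t + 2. -/
lemma adj_helper (m x y k c : ℕ) (hk : k < 4) (h : y + 1 + c * m = x + 2^k) :
    (knodel 4 m).Adj (Sum.inl (x : ZMod m)) (Sum.inr (y : ZMod m)) := by
  refine ⟨k, hk, ?_⟩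
  have h2 : ((y + 1 + c * m : ℕ) : ZMod m) = ((x + 2^k : ℕ) : ZMod m) := by rw [h]
  push_cast at h2
  rw [ZMod.natCast_self] at h2
  linear_combination h2


theorem dominating_set_mod2 (t : ℕ) (ht : 2 ≤ t) :
    IsDominatingSet (knodel 4 (5 * t + 1))
      (((fun j : ℕ => (Sum.inl ((5 * j + 1 : ℕ) : ZMod (5 * t + 1)) :
          ZMod (5 * t + 1) ⊕ ZMod (5 * t + 1))) '' Set.Iio (t + 1)) ∪
       ((fun j : ℕ => (Sum.inr ((5 * (j + 1) : ℕ) : ZMod (5 * t + 1)) :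
          ZMod (5 * t + 1) ⊕ ZMod (5 * t + 1))) '' Set.Iio t) ∪
       {Sum.inr ((5 * t + 1 : ℕ) : ZMod (5 * t + 1))}) ∧
    (((fun j : ℕ => (Sum.inl ((5 * j + 1 : ℕ) : ZMod (5 * t + 1)) :
          ZMod (5 * t + 1) ⊕ ZMod (5 * t + 1))) '' Set.Iio (t + 1)) ∪
       ((fun j : ℕ => (Sum.inr ((5 * (j + 1) : ℕ) : ZMod (5 * t + 1)) :
          ZMod (5 * t + 1) ⊕ ZMod (5 * t + 1))) '' Set.Iio t) ∪
       {Sum.inr ((5 * t + 1 : ℕ) : ZMod (5 * t + 1))}).ncard = 2 * t + 2 := by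
  constructor
  · haveI : NeZero (5 * t + 1) := ⟨by omega⟩
    rintro (i | j) hv
    · -- v = inl i
      set n := i.val with hn
      have hni : ((n : ℕ) : ZMod (5 * t + 1)) = i := ZMod.natCast_rightInverse i
      have hlt : n < 5 * t + 1 := ZMod.val_lt i
      have key1 : ∀ a, a < t + 1 → i ≠ ((5 * a + 1 : ℕ) : ZMod (5 * t + 1)) := by
        intro a ha he
        exact hv (Set.mem_union_left _ (Set.mem_union_left _ ⟨a, ha, by rw [he]⟩))
      -- r = 1 impossible
      have hr1 : n % 5 ≠ 1 := by
        intro hr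
        exact key1 (n / 5) (by omega) (by rw [← hni]; congr 1; omega)
      have hr0 : n ≠ 0 := by
        intro h0
        refine key1 t (by omega) ?_
        rw [← hni, h0]
        simp [ZMod.natCast_self]
      have h5 : n % 5 = 0 ∨ n % 5 = 2 ∨ n % 5 = 3 ∨ n % 5 = 4 := by omega
      set q := n / 5 with hq
      rcases h5 with hr | hr | hr | hr
      · -- r = 0, q ≥ 1 : use inr (5*((q-1)+1)) = inr n
        refine ⟨Sum.inr ((5 * ((q - 1) + 1) : ℕ) : ZMod (5 * t + 1)),
          Set.mem_union_left _ (Set.mem_union_right _ ⟨q - 1, Set.mem_Iio.mpr (by omega), rfl⟩), ?_⟩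
        have := (adj_helper (5 * t + 1) n (5 * ((q - 1) + 1)) 0 0 (by omega)
          (by norm_num; omega)).symm
        rwa [hni] at this
      · -- r = 2 : use inr (5*(q+1)) = i + 4 - 1
        refine ⟨Sum.inr ((5 * (q + 1) : ℕ) : ZMod (5 * t + 1)),
          Set.mem_union_left _ (Set.mem_union_right _ ⟨q, Set.mem_Iio.mpr (by omega), rfl⟩), ?_⟩
        have := (adj_helper (5 * t + 1) n (5 * (q + 1)) 2 0 (by omega)
          (by norm_num; omega)).symm
        rwa [hni] at this
      · -- r = 3
        rcases Nat.lt_or_ge q (t - 1) with hqt | hqt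
        · refine ⟨Sum.inr ((5 * ((q + 1) + 1) : ℕ) : ZMod (5 * t + 1)),
            Set.mem_union_left _ (Set.mem_union_right _ ⟨q + 1, Set.mem_Iio.mpr (by omega), rfl⟩), ?_⟩
          have := (adj_helper (5 * t + 1) n (5 * ((q + 1) + 1)) 3 0 (by omega)
            (by norm_num; omega)).symm
          rwa [hni] at this
        · -- q = t - 1 : use the singleton inr (5t+1)
          refine ⟨Sum.inr ((5 * t + 1 : ℕ) : ZMod (5 * t + 1)),
            Set.mem_union_right _ rfl, ?_⟩
          have := (adj_helper (5 * t + 1) n (5 * t + 1) 2 0 (by omega)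
            (by norm_num; omega)).symm
          rwa [hni] at this
      · -- r = 4 : use inr (5*(q+1)) = i + 2 - 1
        refine ⟨Sum.inr ((5 * (q + 1) : ℕ) : ZMod (5 * t + 1)),
          Set.mem_union_left _ (Set.mem_union_right _ ⟨q, Set.mem_Iio.mpr (by omega), rfl⟩), ?_⟩
        have := (adj_helper (5 * t + 1) n (5 * (q + 1)) 1 0 (by omega)
          (by norm_num; omega)).symm
        rwa [hni] at this
    · -- v = inr j
      set n := j.val with hn
      have hni : ((n : ℕ) : ZMod (5 * t + 1)) = j := ZMod.natCast_rightInverse j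
      have hlt : n < 5 * t + 1 := ZMod.val_lt j
      have key2 : ∀ b, b < t → j ≠ ((5 * (b + 1) : ℕ) : ZMod (5 * t + 1)) := by
        intro b hb he
        exact hv (Set.mem_union_left _ (Set.mem_union_right _ ⟨b, hb, by rw [he]⟩))
      have key3 : j ≠ ((5 * t + 1 : ℕ) : ZMod (5 * t + 1)) := by
        intro he
        exact hv (Set.mem_union_right _ (by rw [he]; rfl))
      have hr0 : n % 5 ≠ 0 := by
        intro hr
        rcases Nat.eq_zero_or_pos n with h0 | h0
        · refine key3 ?_
          rw [← hni, h0]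
          simp [ZMod.natCast_self]
        · exact key2 (n / 5 - 1) (by omega) (by rw [← hni]; congr 1; omega)
      set q := n / 5 with hq
      have h5 : n % 5 = 1 ∨ n % 5 = 2 ∨ n % 5 = 3 ∨ n % 5 = 4 := by omega
      rcases h5 with hr | hr | hr | hr
      · refine ⟨Sum.inl ((5 * q + 1 : ℕ) : ZMod (5 * t + 1)),
          Set.mem_union_left _ (Set.mem_union_left _ ⟨q, Set.mem_Iio.mpr (by omega), rfl⟩), ?_⟩
        have := adj_helper (5 * t + 1) (5 * q + 1) n 0 0 (by omega) (by norm_num; omega)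
        rwa [hni] at this
      · refine ⟨Sum.inl ((5 * q + 1 : ℕ) : ZMod (5 * t + 1)),
          Set.mem_union_left _ (Set.mem_union_left _ ⟨q, Set.mem_Iio.mpr (by omega), rfl⟩), ?_⟩
        have := adj_helper (5 * t + 1) (5 * q + 1) n 1 0 (by omega) (by norm_num; omega)
        rwa [hni] at this
      · rcases Nat.eq_zero_or_pos q with h0 | h0
        · -- n = 3 : use inl (5t+1) ≡ 0, k = 2, wraparound
          refine ⟨Sum.inl ((5 * t + 1 : ℕ) : ZMod (5 * t + 1)),
            Set.mem_union_left _ (Set.mem_union_left _ ⟨t, Set.mem_Iio.mpr (by omega), rfl⟩), ?_⟩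
          have := adj_helper (5 * t + 1) (5 * t + 1) n 2 1 (by omega) (by norm_num; omega)
          rwa [hni] at this
        · refine ⟨Sum.inl ((5 * (q - 1) + 1 : ℕ) : ZMod (5 * t + 1)),
            Set.mem_union_left _ (Set.mem_union_left _ ⟨q - 1, Set.mem_Iio.mpr (by omega), rfl⟩), ?_⟩
          have := adj_helper (5 * t + 1) (5 * (q - 1) + 1) n 3 0 (by omega) (by norm_num; omega)
          rwa [hni] at this
      · refine ⟨Sum.inl ((5 * q + 1 : ℕ) : ZMod (5 * t + 1)),
          Set.mem_union_left _ (Set.mem_union_left _ ⟨q, Set.mem_Iio.mpr (by omega), rfl⟩), ?_⟩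
        have := adj_helper (5 * t + 1) (5 * q + 1) n 2 0 (by omega) (by norm_num; omega)
        rwa [hni] at this
  · haveI : NeZero (5 * t + 1) := ⟨by omega⟩
    set A := ((fun j : ℕ => (Sum.inl ((5 * j + 1 : ℕ) : ZMod (5 * t + 1)) :
            ZMod (5 * t + 1) ⊕ ZMod (5 * t + 1))) '' Set.Iio (t + 1)) with hA
    set B := ((fun j : ℕ => (Sum.inr ((5 * (j + 1) : ℕ) : ZMod (5 * t + 1)) :
            ZMod (5 * t + 1) ⊕ ZMod (5 * t + 1))) '' Set.Iio t) with hB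
    have hAfin : A.Finite := (Set.finite_Iio _).image _
    have hBfin : B.Finite := (Set.finite_Iio _).image _
    have hdisjAB : Disjoint A B := by
      rw [Set.disjoint_left]
      rintro x ⟨a, _, rfl⟩ ⟨b, _, hb⟩
      simp at hb
    have hdisjABC : Disjoint (A ∪ B) {Sum.inr ((5 * t + 1 : ℕ) : ZMod (5 * t + 1))} := by
      rw [Set.disjoint_singleton_right]
      rintro (⟨a, _, ha⟩ | ⟨b, hb, hb'⟩)
      · simp at ha
      · have h1 := Sum.inr.inj hb'
        have h2 := congrArg ZMod.val h1
        rw [ZMod.val_natCast, ZMod.val_natCast, Nat.mod_self,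
          Nat.mod_eq_of_lt (by simp only [Set.mem_Iio] at hb; omega)] at h2
        omega
    have hcardIio : ∀ s : ℕ, (Set.Iio s).ncard = s := by
      intro s
      rw [← Finset.coe_Iio, Set.ncard_coe_finset]
      simp
    have hAcard : A.ncard = t + 1 := by
      rw [hA, Set.ncard_image_of_injOn, hcardIio]
      intro a ha b hb h
      simp only [Set.mem_Iio] at ha hb
      have h2 := congrArg ZMod.val (Sum.inl.inj h)
      rw [ZMod.val_natCast, ZMod.val_natCast] at h2
      rcases Nat.lt_or_ge a t with ha' | ha' <;> rcases Nat.lt_or_ge b t with hb' | hb'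
      · rw [Nat.mod_eq_of_lt (by omega), Nat.mod_eq_of_lt (by omega)] at h2; omega
      · have : b = t := by omega
        subst this
        rw [Nat.mod_eq_of_lt (by omega), Nat.mod_self] at h2; omega
      · have : a = t := by omega
        subst this
        rw [Nat.mod_self, Nat.mod_eq_of_lt (by omega)] at h2; omega
      · omega
    have hBcard : B.ncard = t := by
      rw [hB, Set.ncard_image_of_injOn, hcardIio]
      intro a ha b hb h
      simp only [Set.mem_Iio] at ha hb
      have h2 := congrArg ZMod.val (Sum.inr.inj h)
      rw [ZMod.val_natCast, ZMod.val_natCast, Nat.mod_eq_of_lt (by omega),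
        Nat.mod_eq_of_lt (by omega)] at h2
      omega
    rw [Set.ncard_union_eq hdisjABC (hAfin.union hBfin) (Set.finite_singleton _),
      Set.ncard_union_eq hdisjAB hAfin hBfin, hAcard, hBcard, Set.ncard_singleton]
    omega
end

section
/- If D is a dominating set of W_{4,n} with n = 10t + 4 (t ≥ 2) and bipartition classes U, V, then |D| ≥ 2t + 2; in other words, γ(W_{4,n}) ≥ 2⌊n/10⌋ + 2 when n ≡ 4 (mod 10). -/
lemma memK4_aux : ∀ x : Fin 5, x.val < 4 → x ∈ ({0, 1, 2, 3} : Finset (Fin 5)) := by decide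

theorem domination_lower_mod4 (t : ℕ) (ht : 2 ≤ t)
    (D : Set (ZMod (5 * t + 2) ⊕ ZMod (5 * t + 2))) (hDfin : D.Finite)
    (hD : IsDominatingSet (knodel 4 (5 * t + 2)) D) :
    2 * t + 2 ≤ D.ncard := by
  classical
  haveI : NeZero (5 * t + 2) := ⟨by omega⟩
  set DF := hDfin.toFinset with hDF
  set A := DF.filter (fun x => x.isLeft) with hA
  set B := DF.filter (fun x => ¬ x.isLeft) with hB
  set K4 : Finset (Fin 5) := {0, 1, 2, 3} with hK4def
  have hK4 : K4.card = 4 := by decide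
  have keyU : ∀ i : ZMod (5 * t + 2), Sum.inl i ∈ D ∨
      ∃ j k, Sum.inr j ∈ D ∧ k < 4 ∧ j = i + 2 ^ k - 1 := by
    intro i
    by_cases h : Sum.inl i ∈ D
    · exact Or.inl h
    · obtain ⟨u, hu, hadj⟩ := hD _ h
      match u with
      | Sum.inl _ => simp [knodel] at hadj
      | Sum.inr j =>
        obtain ⟨k, hk, hjk⟩ := hadj
        exact Or.inr ⟨j, k, hu, hk, hjk⟩
  have keyV : ∀ j : ZMod (5 * t + 2), Sum.inr j ∈ D ∨
      ∃ i k, Sum.inl i ∈ D ∧ k < 4 ∧ j = i + 2 ^ k - 1 := by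
    intro j
    by_cases h : Sum.inr j ∈ D
    · exact Or.inl h
    · obtain ⟨u, hu, hadj⟩ := hD _ h
      match u with
      | Sum.inr _ => simp [knodel] at hadj
      | Sum.inl i =>
        obtain ⟨k, hk, hjk⟩ := hadj
        exact Or.inr ⟨i, k, hu, hk, hjk⟩
  -- U-side count : 5t+2 ≤ |A| + 4|B|
  have hU : 5 * t + 2 ≤ A.card + 4 * B.card := by
    have hsurj : Set.SurjOn
        (fun p : (ZMod (5 * t + 2) ⊕ ZMod (5 * t + 2)) × Fin 5 =>
          match p.1 with
          | Sum.inl i => i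
          | Sum.inr j => j - 2 ^ (p.2 : ℕ) + 1)
        ↑(A ×ˢ ({4} : Finset (Fin 5)) ∪ B ×ˢ K4)
        ↑(Finset.univ : Finset (ZMod (5 * t + 2))) := by
      intro i _
      rcases keyU i with h | ⟨j, k, hj, hk, hjk⟩
      · refine ⟨(Sum.inl i, 4), ?_, rfl⟩
        simp only [Finset.coe_union, Set.mem_union, Finset.mem_coe, Finset.mem_product,
          Finset.mem_singleton, hA]
        exact Or.inl ⟨Finset.mem_filter.2 ⟨hDfin.mem_toFinset.2 h, rfl⟩, trivial⟩
      · refine ⟨(Sum.inr j, ⟨k, by omega⟩), ?_, ?_⟩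
        · simp only [Finset.coe_union, Set.mem_union, Finset.mem_coe, Finset.mem_product, hB]
          exact Or.inr ⟨Finset.mem_filter.2 ⟨hDfin.mem_toFinset.2 hj, by simp⟩,
            memK4_aux ⟨k, by omega⟩ hk⟩
        · show j - 2 ^ k + 1 = i
          rw [hjk]; ring
    have h1 := Finset.card_le_card_of_surjOn _ hsurj
    have h2 : (A ×ˢ ({4} : Finset (Fin 5)) ∪ B ×ˢ K4).card ≤ A.card + 4 * B.card := by
      calc (A ×ˢ ({4} : Finset (Fin 5)) ∪ B ×ˢ K4).card
          ≤ (A ×ˢ ({4} : Finset (Fin 5))).card + (B ×ˢ K4).card := Finset.card_union_le _ _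
        _ = A.card + 4 * B.card := by
            rw [Finset.card_product, Finset.card_product, hK4]
            simp [mul_comm]
    have h3 : (Finset.univ : Finset (ZMod (5 * t + 2))).card = 5 * t + 2 := by
      rw [Finset.card_univ, ZMod.card]
    omega
  -- V-side count : 5t+2 ≤ |B| + 4|A|
  have hV : 5 * t + 2 ≤ B.card + 4 * A.card := by
    have hsurj : Set.SurjOn
        (fun p : (ZMod (5 * t + 2) ⊕ ZMod (5 * t + 2)) × Fin 5 =>
          match p.1 with
          | Sum.inr j => j
          | Sum.inl i => i + 2 ^ (p.2 : ℕ) - 1)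
        ↑(B ×ˢ ({4} : Finset (Fin 5)) ∪ A ×ˢ K4)
        ↑(Finset.univ : Finset (ZMod (5 * t + 2))) := by
      intro j _
      rcases keyV j with h | ⟨i, k, hi, hk, hjk⟩
      · refine ⟨(Sum.inr j, 4), ?_, rfl⟩
        simp only [Finset.coe_union, Set.mem_union, Finset.mem_coe, Finset.mem_product,
          Finset.mem_singleton, hB]
        exact Or.inl ⟨Finset.mem_filter.2 ⟨hDfin.mem_toFinset.2 h, by simp⟩, trivial⟩
      · refine ⟨(Sum.inl i, ⟨k, by omega⟩), ?_, ?_⟩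
        · simp only [Finset.coe_union, Set.mem_union, Finset.mem_coe, Finset.mem_product, hA]
          exact Or.inr ⟨Finset.mem_filter.2 ⟨hDfin.mem_toFinset.2 hi, rfl⟩,
            memK4_aux ⟨k, by omega⟩ hk⟩
        · show i + 2 ^ k - 1 = j
          rw [hjk]
    have h1 := Finset.card_le_card_of_surjOn _ hsurj
    have h2 : (B ×ˢ ({4} : Finset (Fin 5)) ∪ A ×ˢ K4).card ≤ B.card + 4 * A.card := by
      calc (B ×ˢ ({4} : Finset (Fin 5)) ∪ A ×ˢ K4).card
          ≤ (B ×ˢ ({4} : Finset (Fin 5))).card + (A ×ˢ K4).card := Finset.card_union_le _ _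
        _ = B.card + 4 * A.card := by
            rw [Finset.card_product, Finset.card_product, hK4]
            simp [mul_comm]
    have h3 : (Finset.univ : Finset (ZMod (5 * t + 2))).card = 5 * t + 2 := by
      rw [Finset.card_univ, ZMod.card]
    omega
  have hcard : A.card + B.card = DF.card :=
    Finset.card_filter_add_card_filter_not (s := DF) (p := fun x => Sum.isLeft x)
  have hDcard : D.ncard = DF.card := by
    rw [hDF, Set.ncard_eq_toFinset_card D hDfin]
  omega
end

section
/- In the Knödel graph W_{4,n} (n ≥ 16 even), every set S ⊆ U of size s dominates at most 4s vertices of V; moreover, if two vertices of S have index-distance in M_4 = {1,2,3,4,6,7} (or with n/2 minus that distance in M_4), then S dominates at most 4s - 1 vertices of V. -/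
theorem knodel_dominates_at_most (n : ℕ) (hn : Even n) (h16 : 16 ≤ n)
    (S : Finset ℕ) (hS : ∀ i ∈ S, 1 ≤ i ∧ i ≤ n / 2) :
    {w : ZMod (n / 2) ⊕ ZMod (n / 2) |
        ∃ i ∈ S, (knodel 4 (n / 2)).Adj (Sum.inl (i : ZMod (n / 2))) w}.ncard ≤
      4 * S.card ∧
    ((∃ i ∈ S, ∃ j ∈ S, i ≠ j ∧
        (idDist (n / 2) i j ∈ ({1, 2, 3, 4, 6, 7} : Set ℕ) ∨
         n / 2 - idDist (n / 2) i j ∈ ({1, 2, 3, 4, 6, 7} : Set ℕ))) →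
      {w : ZMod (n / 2) ⊕ ZMod (n / 2) |
          ∃ i ∈ S, (knodel 4 (n / 2)).Adj (Sum.inl (i : ZMod (n / 2))) w}.ncard ≤
        4 * S.card - 1) := by
  classical
  set m := n / 2 with hm_def
  have hm : 8 ≤ m := by omega
  set f : ℕ × ℕ → ZMod m ⊕ ZMod m := fun p => Sum.inr ((p.1 : ZMod m) + 2 ^ p.2 - 1) with hf
  set P : Finset (ℕ × ℕ) := S ×ˢ Finset.range 4 with hP
  have hAeq : {w : ZMod m ⊕ ZMod m | ∃ i ∈ S, (knodel 4 m).Adj (Sum.inl (i : ZMod m)) w}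
      = ↑(P.image f) := by
    ext w
    cases w with
    | inl x => simp [knodel, hP, hf]
    | inr j =>
      simp only [Set.mem_setOf_eq, knodel, Finset.coe_image, Set.mem_image, Finset.mem_coe,
        hP, hf, Finset.mem_product, Finset.mem_range]
      constructor
      · rintro ⟨i, hi, k, hk, hjk⟩
        exact ⟨(i, k), ⟨hi, hk⟩, by simp [hjk]⟩
      · rintro ⟨⟨i, k⟩, ⟨hi, hk⟩, hjk⟩
        simp only [Sum.inr.injEq] at hjk
        exact ⟨i, hi, k, hk, hjk.symm⟩
  have hPc : P.card = S.card * 4 := by rw [hP]; simp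
  have part1 : (P.image f).card ≤ 4 * S.card := by
    have := Finset.card_image_le (s := P) (f := f)
    omega
  refine ⟨by rw [hAeq, Set.ncard_coe_finset]; exact part1, ?_⟩
  rintro ⟨i, hiS, j, hjS, hij, hcond⟩
  obtain ⟨hi1, hi2⟩ := hS i hiS
  obtain ⟨hj1, hj2⟩ := hS j hjS
  have hd : ∃ d : ℕ, 1 ≤ d ∧ d ≤ 7 ∧ d ≠ 5 ∧
      ((i:ℤ) - j = d ∨ (j:ℤ) - i = d ∨ (i:ℤ) - j = (m:ℤ) - d ∨ (j:ℤ) - i = (m:ℤ) - d) := by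
    refine ⟨if idDist m i j ∈ ({1,2,3,4,6,7} : Finset ℕ) then idDist m i j
      else m - idDist m i j, ?_⟩
    simp only [Set.mem_insert_iff, Set.mem_singleton_iff] at hcond
    simp only [Finset.mem_insert, Finset.mem_singleton, idDist] at *
    split_ifs with h1 <;> omega
  obtain ⟨d, hd1, hd7, hd5, hde⟩ := hd
  have hz : (i : ZMod m) = (j : ZMod m) + d ∨ (j : ZMod m) = (i : ZMod m) + d := by
    rcases hde with h | h | h | h
    · left
      have := congrArg (Int.cast : ℤ → ZMod m) (show (i:ℤ) = j + d by linarith)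
      push_cast at this; exact this
    · right
      have := congrArg (Int.cast : ℤ → ZMod m) (show (j:ℤ) = i + d by linarith)
      push_cast at this; exact this
    · right
      have := congrArg (Int.cast : ℤ → ZMod m) (show (j:ℤ) = i + d - m by linarith)
      push_cast at this
      simpa [ZMod.natCast_self] using this
    · left
      have := congrArg (Int.cast : ℤ → ZMod m) (show (i:ℤ) = j + d - m by linarith)
      push_cast at this
      simpa [ZMod.natCast_self] using this
  have hk : ∃ a b : ℕ, a < 4 ∧ b < 4 ∧ (2:ℕ)^a = 2^b + d := by
    interval_cases d
    · exact ⟨1, 0, by norm_num⟩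
    · exact ⟨2, 1, by norm_num⟩
    · exact ⟨2, 0, by norm_num⟩
    · exact ⟨3, 2, by norm_num⟩
    · omega
    · exact ⟨3, 1, by norm_num⟩
    · exact ⟨3, 0, by norm_num⟩
  obtain ⟨a, b, ha4, hb4, hab⟩ := hk
  have h2 : ((2:ZMod m))^a = (2:ZMod m)^b + d := by
    have := congrArg (Nat.cast : ℕ → ZMod m) hab
    push_cast at this; exact this
  have hcol : ∃ p q : ℕ × ℕ, p ∈ P ∧ q ∈ P ∧ p ≠ q ∧ f p = f q := by
    rcases hz with h | h
    · refine ⟨(i, b), (j, a), Finset.mem_product.mpr ⟨hiS, Finset.mem_range.mpr hb4⟩,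
        Finset.mem_product.mpr ⟨hjS, Finset.mem_range.mpr ha4⟩, by simp [Prod.ext_iff, hij], ?_⟩
      simp only [hf]
      congr 1
      rw [h, h2]; ring
    · refine ⟨(j, b), (i, a), Finset.mem_product.mpr ⟨hjS, Finset.mem_range.mpr hb4⟩,
        Finset.mem_product.mpr ⟨hiS, Finset.mem_range.mpr ha4⟩, by simp [Prod.ext_iff, hij.symm], ?_⟩
      simp only [hf]
      congr 1
      rw [h, h2]; ring
  obtain ⟨p, q, hpP, hqP, hpq, hfpq⟩ := hcol
  have himg : P.image f = (P.erase p).image f := by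
    apply Finset.Subset.antisymm
    · intro x hx
      simp only [Finset.mem_image] at hx ⊢
      obtain ⟨r, hr, hrx⟩ := hx
      by_cases hrp : r = p
      · exact ⟨q, Finset.mem_erase.mpr ⟨Ne.symm hpq, hqP⟩, by rw [← hrx, hrp, hfpq]⟩
      · exact ⟨r, Finset.mem_erase.mpr ⟨hrp, hr⟩, hrx⟩
    · exact Finset.image_subset_image (Finset.erase_subset _ _)
  rw [hAeq, Set.ncard_coe_finset, himg]
  have h1 := Finset.card_image_le (s := P.erase p) (f := f)
  have h2 := Finset.card_erase_of_mem hpP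
  omega
end
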